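/- arXiv:0903.0888 — 4 statements merged into one kernel-verified Lean document; each statement's English description precedes it below -/
import Mathlib

section
/- For every positive integer i, the function x ↦ x^(i+1) · |ψ^(i)(x)| is strictly increasing on (0, ∞), where ψ^(i) denotes the i-th polygamma function (i-th derivative of the digamma function). -/
open Real Set Filter Topology Nat

noncomputable def digamma : ℝ → ℝ := deriv (fun x => Real.log (Real.Gamma x))

noncomputable def polygamma (i : ℕ) : ℝ → ℝ := iteratedDeriv i digamma

noncomputable def polyS (k : ℕ) (x : ℝ) : ℝ := ∑' n : ℕ, 1 / ((n : ℝ) + x) ^ k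

noncomputable def polyT (x : ℝ) : ℝ := ∑' n : ℕ, (1 / ((n : ℝ) + 1) - 1 / ((n : ℝ) + x))

local notation "γ" => Real.eulerMascheroniConstant

lemma aux_bound {x : ℝ} (hx : 0 < x) (n : ℕ) : min 1 x * ((n : ℝ) + 1) ≤ (n : ℝ) + x := by
  rcases le_total 1 x with h | h
  · rw [min_eq_left h]; nlinarith [Nat.cast_nonneg (α := ℝ) n]
  · rw [min_eq_right h]; nlinarith [Nat.cast_nonneg (α := ℝ) n]

lemma summable_one_div_nat_add_one_sq : Summable (fun n : ℕ => 1 / ((n : ℝ) + 1) ^ 2) := by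
  have := (summable_nat_add_iff (f := fun n : ℕ => 1 / (n : ℝ) ^ 2) 1).2
    ((Real.summable_one_div_nat_pow).2 one_lt_two)
  simpa using this

/-- bound of `1/(n+x)^k` by a constant multiple of `1/(n+1)^2`, for `x ≥ ε > 0`. -/
lemma aux_le {x ε : ℝ} (hε : 0 < ε) (hx : ε ≤ x) {k : ℕ} (hk : 2 ≤ k) (n : ℕ) :
    1 / ((n : ℝ) + x) ^ k ≤ (min 1 ε)⁻¹ ^ k * (1 / ((n : ℝ) + 1) ^ 2) := by
  have hm : 0 < min 1 ε := lt_min one_pos hε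
  have h1 : (0:ℝ) < (n : ℝ) + x := by
    have := Nat.cast_nonneg (α := ℝ) n; linarith
  have h2 : (0:ℝ) < (n : ℝ) + 1 := by positivity
  have hb : min 1 ε * ((n:ℝ) + 1) ≤ (n:ℝ) + x := (aux_bound hε n).trans (by linarith)
  have step1 : 1 / ((n:ℝ) + x) ^ k ≤ (min 1 ε)⁻¹ ^ k * (1 / ((n : ℝ) + 1) ^ k) := by
    rw [one_div, ← inv_pow, one_div, ← inv_pow, ← mul_pow, ← mul_inv]
    apply pow_le_pow_left₀ (by positivity)
    rw [inv_le_inv₀ h1 (by positivity)]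
    linarith
  refine step1.trans ?_
  have h3 : 1 / ((n:ℝ) + 1) ^ k ≤ 1 / ((n:ℝ) + 1) ^ 2 := by
    apply one_div_le_one_div_of_le (by positivity)
    exact pow_le_pow_right₀ (by linarith [Nat.cast_nonneg (α := ℝ) n]) hk
  have hc : (0:ℝ) ≤ (min 1 ε)⁻¹ ^ k := by positivity
  nlinarith [h3]

lemma summable_polyS {x : ℝ} (hx : 0 < x) {k : ℕ} (hk : 2 ≤ k) :
    Summable (fun n : ℕ => 1 / ((n : ℝ) + x) ^ k) := by
  have pos : ∀ n : ℕ, 0 ≤ 1 / ((n : ℝ) + x) ^ k := by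
    intro n
    have h1 : (0:ℝ) < (n : ℝ) + x := by positivity
    positivity
  exact Summable.of_nonneg_of_le pos (aux_le hx le_rfl hk)
    (summable_one_div_nat_add_one_sq.mul_left _)

lemma summable_polyT {x : ℝ} (hx : 0 < x) :
    Summable (fun n : ℕ => 1 / ((n : ℝ) + 1) - 1 / ((n : ℝ) + x)) := by
  have hm : 0 < min 1 x := lt_min one_pos hx
  refine Summable.of_norm_bounded (g := fun n : ℕ => (|x - 1| * (min 1 x)⁻¹) * (1 / ((n : ℝ) + 1) ^ 2))
    ((summable_one_div_nat_add_one_sq.mul_left _)) (fun n => ?_)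
  have h1 : (0:ℝ) < (n : ℝ) + x := by positivity
  have h2 : (0:ℝ) < (n : ℝ) + 1 := by positivity
  have hb := aux_bound hx n
  have e1 : 1 / ((n:ℝ) + 1) - 1 / ((n:ℝ) + x) = (x - 1) / (((n:ℝ) + 1) * ((n:ℝ) + x)) := by
    field_simp
    ring
  rw [Real.norm_eq_abs, e1, abs_div, abs_of_pos (mul_pos h2 h1)]
  have e2 : |x - 1| * (min 1 x)⁻¹ * (1 / ((n:ℝ) + 1) ^ 2)
      = |x - 1| / (min 1 x * ((n:ℝ) + 1) ^ 2) := by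
    field_simp
  rw [e2]
  apply div_le_div_of_nonneg_left (abs_nonneg _) (mul_pos hm (by positivity))
  nlinarith

lemma polyS_pos {x : ℝ} (hx : 0 < x) {k : ℕ} (hk : 2 ≤ k) : 0 < polyS k x := by
  have h0 : (0:ℝ) < 1 / ((0:ℕ) + x) ^ k := by
    have : (0:ℝ) < ((0:ℕ):ℝ) + x := by positivity
    positivity
  refine Summable.tsum_pos (summable_polyS hx hk) (fun n => ?_) 0 h0
  have : (0:ℝ) < (n:ℝ) + x := by positivity
  positivity

/-- derivative of `polyT` -/
lemma hasDerivAt_polyT {x : ℝ} (hx : 0 < x) : HasDerivAt polyT (polyS 2 x) x := by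
  set ε : ℝ := min x 1 / 2 with hε
  have hε0 : 0 < ε := by positivity
  have hεx : ε < x := by
    have : min x 1 ≤ x := min_le_left _ _
    simp only [hε]; linarith
  have hε1 : ε < 1 := by
    have : min x 1 ≤ 1 := min_le_right _ _
    simp only [hε]; linarith
  refine hasDerivAt_tsum_of_isPreconnected
    (u := fun n : ℕ => (min 1 ε)⁻¹ ^ 2 * (1 / ((n : ℝ) + 1) ^ 2))
    (g' := fun (n : ℕ) (y : ℝ) => 1 / ((n : ℝ) + y) ^ 2)
    (summable_one_div_nat_add_one_sq.mul_left _) isOpen_Ioi (isPreconnected_Ioi)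
    (fun n y hy => ?_) (fun n y hy => ?_) (mem_Ioi.2 hε1) ?_ (mem_Ioi.2 hεx)
  · have hy0 : 0 < y := hε0.trans hy
    have hne : ((n:ℝ) + y) ≠ 0 := by positivity
    have h := (((hasDerivAt_id y).const_add ((n:ℝ))).inv hne).const_sub (1 / ((n:ℝ) + 1))
    simp only [id_eq] at h
    simpa [one_div, neg_div, neg_neg] using h
  · rw [Real.norm_eq_abs, abs_of_nonneg (by positivity)]
    exact aux_le hε0 (le_of_lt hy) le_rfl n
  · simpa using summable_zero

/-- derivative of `polyS` -/
lemma hasDerivAt_polyS {k : ℕ} (hk : 2 ≤ k) {x : ℝ} (hx : 0 < x) :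
    HasDerivAt (polyS k) (-(k : ℝ) * polyS (k + 1) x) x := by
  set ε : ℝ := x / 2 with hε
  have hε0 : 0 < ε := by positivity
  have hεx : ε < x := by simp only [hε]; linarith
  have key : HasDerivAt (fun z => ∑' n : ℕ, 1 / ((n:ℝ) + z) ^ k)
      (∑' n : ℕ, -(k:ℝ) * (1 / ((n:ℝ) + x) ^ (k + 1))) x := by
    refine hasDerivAt_tsum_of_isPreconnected
      (u := fun n : ℕ => (k : ℝ) * ((min 1 ε)⁻¹ ^ (k+1) * (1 / ((n : ℝ) + 1) ^ 2)))
      (g' := fun (n : ℕ) (y : ℝ) => -(k:ℝ) * (1 / ((n : ℝ) + y) ^ (k+1)))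
      ((summable_one_div_nat_add_one_sq.mul_left _).mul_left _) isOpen_Ioi isPreconnected_Ioi
      (fun n y hy => ?_) (fun n y hy => ?_) (mem_Ioi.2 hεx) ?_ (mem_Ioi.2 hεx)
    · have hy0 : 0 < y := hε0.trans hy
      have hp : (0:ℝ) < (n:ℝ) + y := by positivity
      have hne : ((n:ℝ) + y) ^ k ≠ 0 := by positivity
      have h := (((hasDerivAt_id y).const_add ((n:ℝ))).pow k).inv hne
      simp only [id_eq, mul_one, Pi.pow_apply] at h
      have e : -((k:ℝ) * ((n:ℝ) + y) ^ (k - 1)) / (((n:ℝ) + y) ^ k) ^ 2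
          = -(k:ℝ) * (1 / ((n:ℝ) + y) ^ (k + 1)) := by
        have hk1 : 1 ≤ k := le_trans one_le_two hk
        rw [mul_one_div, ← pow_mul,
          div_eq_div_iff (by positivity) (by positivity),
          show k * 2 = (k - 1) + (k + 1) by omega, pow_add]
        ring
      rw [e] at h
      simpa [one_div, Pi.inv_def, Pi.pow_def] using h
    · have hy0 : 0 < y := hε0.trans hy
      have hp : (0:ℝ) < (n:ℝ) + y := by positivity
      have habs : ‖-(k:ℝ) * (1 / ((n:ℝ) + y) ^ (k+1))‖ = (k:ℝ) * (1 / ((n:ℝ) + y) ^ (k+1)) := by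
        rw [norm_mul, norm_neg, Real.norm_natCast, Real.norm_eq_abs,
          abs_of_nonneg (by positivity)]
      rw [habs]
      exact mul_le_mul_of_nonneg_left (aux_le hε0 (le_of_lt hy) (by omega : 2 ≤ k + 1) n)
        (Nat.cast_nonneg k)
    · exact summable_polyS hx hk
  have e2 : -(k:ℝ) * polyS (k + 1) x = ∑' n : ℕ, -(k:ℝ) * (1 / ((n:ℝ) + x) ^ (k + 1)) :=
    tsum_mul_left.symm
  rw [polyS] at *
  rw [e2]
  exact key

lemma hasSum_telescope {x : ℝ} (hx : 0 < x) :
    HasSum (fun n : ℕ => 1 / ((n : ℝ) + x) - 1 / ((n : ℝ) + x + 1)) (1 / x) := by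
  have hnn : ∀ n : ℕ, 0 ≤ 1 / ((n : ℝ) + x) - 1 / ((n : ℝ) + x + 1) := by
    intro n
    have h1 : (0:ℝ) < (n:ℝ) + x := by positivity
    have := one_div_le_one_div_of_le h1 (by linarith : (n:ℝ) + x ≤ (n:ℝ) + x + 1)
    linarith
  rw [hasSum_iff_tendsto_nat_of_nonneg hnn]
  have e : ∀ N : ℕ, ∑ n ∈ Finset.range N, (1 / ((n : ℝ) + x) - 1 / ((n : ℝ) + x + 1))
      = 1 / x - 1 / ((N : ℝ) + x) := by
    intro N
    have := Finset.sum_range_sub' (fun n : ℕ => 1 / ((n : ℝ) + x)) N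
    simp only [Nat.cast_zero, zero_add] at this
    rw [← this]
    apply Finset.sum_congr rfl
    intro i _
    push_cast
    ring_nf
  simp only [e]
  have : Tendsto (fun N : ℕ => 1 / ((N : ℝ) + x)) atTop (𝓝 0) := by
    simp only [one_div]
    exact Tendsto.inv_tendsto_atTop
      (tendsto_atTop_add_const_right _ x tendsto_natCast_atTop_atTop)
  simpa using tendsto_const_nhds.sub this

/-- recurrence for `polyT` -/
lemma polyT_add_one {x : ℝ} (hx : 0 < x) : polyT (x + 1) = polyT x + 1 / x := by
  have hT := summable_polyT hx
  have hc := hasSum_telescope hx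
  have e : ∀ n : ℕ, 1 / ((n:ℝ) + 1) - 1 / ((n:ℝ) + (x + 1))
      = (1 / ((n:ℝ) + 1) - 1 / ((n:ℝ) + x)) + (1 / ((n:ℝ) + x) - 1 / ((n:ℝ) + x + 1)) := by
    intro n
    ring_nf
  rw [polyT, tsum_congr e, hT.tsum_add hc.summable, ← polyT, hc.tsum_eq]

lemma polyT_one : polyT 1 = 0 := by
  simp [polyT]

lemma polyT_nat (N : ℕ) : polyT (N + 1) = harmonic N := by
  induction N with
  | zero => simpa using polyT_one
  | succ n ih =>
    have hn : (0:ℝ) < (n:ℝ) + 1 := by positivity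
    have := polyT_add_one hn
    rw [harmonic_succ]
    push_cast
    rw [show ((n:ℝ) + 1 + 1) = ((n:ℝ) + 1) + 1 by ring, this, ih, one_div]

lemma polyT_mono {a b : ℝ} (ha : 0 < a) (hab : a ≤ b) : polyT a ≤ polyT b := by
  have hb : 0 < b := lt_of_lt_of_le ha hab
  refine Summable.tsum_le_tsum (fun n => ?_) (summable_polyT ha) (summable_polyT hb)
  have h1 : (0:ℝ) < (n:ℝ) + a := by positivity
  have := one_div_le_one_div_of_le h1 (by linarith : (n:ℝ) + a ≤ (n:ℝ) + b)
  linarith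

lemma digamma_eq_deriv : digamma = deriv (Real.log ∘ Real.Gamma) := by
  rw [digamma, Function.comp_def]

lemma diffat_logGamma {x : ℝ} (hx : 0 < x) : DifferentiableAt ℝ (Real.log ∘ Real.Gamma) x := by
  refine ((Real.differentiableAt_Gamma ?_).log (Real.Gamma_ne_zero ?_)) <;>
    exact fun m => ne_of_gt (by have := Nat.cast_nonneg (α := ℝ) m; linarith)

/-- recurrence for digamma -/
lemma digamma_add_one {x : ℝ} (hx : 0 < x) : digamma (x + 1) = digamma x + 1 / x := by
  rw [digamma_eq_deriv]
  have h_rec : ∀ y : ℝ, 0 < y → (Real.log ∘ Real.Gamma) (y + 1)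
      = (Real.log ∘ Real.Gamma) y + Real.log y := by
    intro y hy
    simp only [Function.comp_apply, Real.Gamma_add_one hy.ne',
      Real.log_mul hy.ne' (Real.Gamma_pos_of_pos hy).ne', add_comm]
  rw [← deriv_comp_add_const, one_div, ← Real.deriv_log,
    ← deriv_add (diffat_logGamma hx) (Real.differentiableAt_log hx.ne')]
  apply Filter.EventuallyEq.deriv_eq
  filter_upwards [eventually_gt_nhds hx] using h_rec

lemma digamma_mono {a b : ℝ} (ha : 0 < a) (hab : a ≤ b) : digamma a ≤ digamma b := by
  rcases eq_or_lt_of_le hab with rfl | hab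
  · rfl
  have hb : 0 < b := ha.trans hab
  have hc := Real.convexOn_log_Gamma
  rw [digamma_eq_deriv]
  exact (hc.deriv_le_slope (mem_Ioi.2 ha) (mem_Ioi.2 hb) hab (diffat_logGamma ha)).trans
    (hc.slope_le_deriv (mem_Ioi.2 ha) (mem_Ioi.2 hb) hab (diffat_logGamma hb))

lemma digamma_nat_lower (n : ℕ) (hn : 0 < n) : Real.log n ≤ digamma (n + 1) := by
  have hc := Real.convexOn_log_Gamma
  have hn' : (0:ℝ) < n := by exact_mod_cast hn
  rw [digamma_eq_deriv]
  refine (le_of_eq ?_).trans <| hc.slope_le_deriv (mem_Ioi.mpr hn')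
    (by positivity : (0:ℝ) < _) (by linarith) (diffat_logGamma (by positivity))
  have h_rec : (Real.log ∘ Real.Gamma) ((n:ℝ) + 1)
      = (Real.log ∘ Real.Gamma) n + Real.log n := by
    simp only [Function.comp_apply, Real.Gamma_add_one hn'.ne',
      Real.log_mul hn'.ne' (Real.Gamma_pos_of_pos hn').ne', add_comm]
  rw [slope_def_field, show (n:ℝ) + 1 - n = (1 : ℝ) by ring, div_one, h_rec, add_sub_cancel_left]

lemma digamma_nat_upper (n : ℕ) : digamma (n + 1) ≤ Real.log (n + 1) := by
  have hc := Real.convexOn_log_Gamma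
  rw [digamma_eq_deriv]
  refine (hc.deriv_le_slope (by positivity : (0:ℝ) < (n:ℝ) + 1)
    (by positivity : (0:ℝ) < (n:ℝ) + 2) (by linarith) (diffat_logGamma (by positivity))).trans
    (le_of_eq ?_)
  have h1 : (0:ℝ) < (n:ℝ) + 1 := by positivity
  have h_rec : (Real.log ∘ Real.Gamma) (((n:ℝ) + 1) + 1)
      = (Real.log ∘ Real.Gamma) ((n:ℝ) + 1) + Real.log ((n:ℝ) + 1) := by
    simp only [Function.comp_apply, Real.Gamma_add_one h1.ne',
      Real.log_mul h1.ne' (Real.Gamma_pos_of_pos h1).ne']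
    ring
  rw [slope_def_field, show (n:ℝ) + 2 - ((n:ℝ) + 1) = (1 : ℝ) by ring, div_one,
    show (n:ℝ) + 2 = ((n:ℝ) + 1) + 1 by ring, h_rec, add_sub_cancel_left]

lemma shift_diff {x : ℝ} (hx : 0 < x) (N : ℕ) :
    digamma (x + N) - polyT (x + N) = digamma x - polyT x := by
  induction N with
  | zero => simp
  | succ n ih =>
    have hxn : 0 < x + n := by positivity
    rw [show x + ((n:ℕ) + 1 : ℕ) = (x + n) + 1 by push_cast; ring,
      digamma_add_one hxn, polyT_add_one hxn]
    linarith [ih]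

lemma log_sub_log_tendsto (a b : ℝ) :
    Tendsto (fun k : ℕ => Real.log ((k:ℝ) + a) - Real.log ((k:ℝ) + b)) atTop (𝓝 0) := by
  have hb : Tendsto (fun k : ℕ => (k:ℝ) + b) atTop atTop :=
    tendsto_atTop_add_const_right _ b tendsto_natCast_atTop_atTop
  have h1 : Tendsto (fun k : ℕ => 1 + (a - b) / ((k:ℝ) + b)) atTop (𝓝 1) := by
    have := (tendsto_const_nhds (x := a - b) (f := atTop (α := ℕ))).div_atTop hb
    simpa using this.const_add 1
  have h2 : Tendsto (fun k : ℕ => Real.log (1 + (a - b) / ((k:ℝ) + b))) atTop (𝓝 0) := by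
    have := (Real.continuousAt_log one_ne_zero).tendsto.comp h1
    simpa [Function.comp_def] using this
  apply h2.congr'
  filter_upwards [eventually_gt_atTop (⌈|a| + |b| + 1⌉₊)] with k hk
  have hk' : |a| + |b| + 1 < (k:ℝ) := lt_of_le_of_lt (Nat.le_ceil _) (by exact_mod_cast hk)
  have ha1 : (0:ℝ) < (k:ℝ) + a := by
    have := abs_le.1 (le_refl |a|) |>.1
    linarith [abs_nonneg b, neg_abs_le a]
  have hb1 : (0:ℝ) < (k:ℝ) + b := by linarith [abs_nonneg a, neg_abs_le b]
  have e : 1 + (a - b) / ((k:ℝ) + b) = ((k:ℝ) + a) / ((k:ℝ) + b) := by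
    field_simp
    ring
  rw [e, Real.log_div ha1.ne' hb1.ne']

/-- the key identity -/
lemma digamma_eq {x : ℝ} (hx : 0 < x) : digamma x = -γ + polyT x := by
  set K := ⌊x⌋₊ with hK
  have hKx : (K:ℝ) ≤ x := Nat.floor_le hx.le
  have hxK : x < K + 1 := Nat.lt_floor_add_one x
  -- upper and lower bounds for the constant difference
  have hUB : ∀ k : ℕ, digamma x - polyT x
      ≤ Real.log ((K:ℝ) + k + 3) - (harmonic (K + k + 1) : ℝ) := by
    intro k
    rw [← shift_diff hx (k + 2)]
    have h1 : digamma (x + (k + 2 : ℕ)) ≤ Real.log ((K:ℝ) + k + 3) := by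
      calc digamma (x + (k + 2 : ℕ)) ≤ digamma (((K + k + 2 : ℕ) : ℝ) + 1) := by
            apply digamma_mono (by positivity)
            push_cast
            linarith
        _ ≤ Real.log ((K + k + 2 : ℕ) + 1) := digamma_nat_upper _
        _ = Real.log ((K:ℝ) + k + 3) := by push_cast; ring_nf
    have h2 : (harmonic (K + k + 1) : ℝ) ≤ polyT (x + (k + 2 : ℕ)) := by
      rw [← polyT_nat (K + k + 1)]
      apply polyT_mono (by positivity)
      push_cast
      linarith
    linarith
  have hLB : ∀ k : ℕ, Real.log ((K:ℝ) + k + 1) - (harmonic (K + k + 2) : ℝ)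
      ≤ digamma x - polyT x := by
    intro k
    rw [← shift_diff hx (k + 2)]
    have h1 : Real.log ((K:ℝ) + k + 1) ≤ digamma (x + (k + 2 : ℕ)) := by
      calc Real.log ((K:ℝ) + k + 1) = Real.log ((K + k + 1 : ℕ) : ℝ) := by push_cast; ring_nf
        _ ≤ digamma (((K + k + 1 : ℕ) : ℝ) + 1) := digamma_nat_lower _ (by omega)
        _ ≤ digamma (x + (k + 2 : ℕ)) := by
            apply digamma_mono (by positivity)
            push_cast
            linarith
    have h2 : polyT (x + (k + 2 : ℕ)) ≤ (harmonic (K + k + 2) : ℝ) := by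
      rw [← polyT_nat (K + k + 2)]
      apply polyT_mono (by positivity)
      push_cast
      linarith
    linarith
  -- limits
  have hharm : Tendsto (fun k : ℕ => ((harmonic (K + k + 1) : ℝ)
      - Real.log ((K + k + 1 : ℕ) : ℝ))) atTop (𝓝 γ) := by
    have := Real.tendsto_harmonic_sub_log.comp (tendsto_add_atTop_nat (K + 1))
    apply this.congr
    intro k
    simp only [Function.comp_apply]
    rw [show K + k + 1 = k + (K + 1) from by omega]
  have hharm2 : Tendsto (fun k : ℕ => ((harmonic (K + k + 2) : ℝ)
      - Real.log ((K + k + 2 : ℕ) : ℝ))) atTop (𝓝 γ) := by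
    have := Real.tendsto_harmonic_sub_log.comp (tendsto_add_atTop_nat (K + 2))
    apply this.congr
    intro k
    simp only [Function.comp_apply]
    rw [show K + k + 2 = k + (K + 2) from by omega]
  have hlog1 : Tendsto (fun k : ℕ => Real.log ((K:ℝ) + k + 3)
      - Real.log ((K + k + 1 : ℕ) : ℝ)) atTop (𝓝 0) := by
    have := log_sub_log_tendsto ((K:ℝ) + 3) ((K:ℝ) + 1)
    apply this.congr
    intro k
    push_cast
    ring_nf
  have hlog2 : Tendsto (fun k : ℕ => Real.log ((K:ℝ) + k + 1)
      - Real.log ((K + k + 2 : ℕ) : ℝ)) atTop (𝓝 0) := by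
    have := log_sub_log_tendsto ((K:ℝ) + 1) ((K:ℝ) + 2)
    apply this.congr
    intro k
    push_cast
    ring_nf
  have hU : Tendsto (fun k : ℕ => Real.log ((K:ℝ) + k + 3) - (harmonic (K + k + 1) : ℝ))
      atTop (𝓝 (-γ)) := by
    have := hlog1.sub hharm
    simp only [zero_sub] at this
    apply this.congr
    intro k
    ring
  have hL : Tendsto (fun k : ℕ => Real.log ((K:ℝ) + k + 1) - (harmonic (K + k + 2) : ℝ))
      atTop (𝓝 (-γ)) := by
    have := hlog2.sub hharm2
    simp only [zero_sub] at this
    apply this.congr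
    intro k
    ring
  have h1 : digamma x - polyT x ≤ -γ := ge_of_tendsto hU (Eventually.of_forall hUB)
  have h2 : -γ ≤ digamma x - polyT x := le_of_tendsto hL (Eventually.of_forall hLB)
  linarith

lemma polygamma_one {x : ℝ} (hx : 0 < x) : polygamma 1 x = polyS 2 x := by
  have hev : digamma =ᶠ[𝓝 x] (fun y => -γ + polyT y) := by
    filter_upwards [Ioi_mem_nhds hx] with y hy
    exact digamma_eq hy
  rw [polygamma, iteratedDeriv_one, hev.deriv_eq,
    ((hasDerivAt_polyT hx).const_add (-γ)).deriv]

lemma polygamma_eq (j : ℕ) {x : ℝ} (hx : 0 < x) :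
    polygamma (j + 1) x = (-1) ^ j * (j + 1)! * polyS (j + 2) x := by
  induction j generalizing x with
  | zero => simpa using polygamma_one hx
  | succ j ih =>
    have hev : polygamma (j + 1) =ᶠ[𝓝 x]
        (fun y => (-1) ^ j * (j + 1)! * polyS (j + 2) y) := by
      filter_upwards [Ioi_mem_nhds hx] with y hy
      exact ih hy
    have hD : HasDerivAt (fun y => ((-1:ℝ)) ^ j * (j + 1)! * polyS (j + 2) y)
        (((-1:ℝ)) ^ j * (j + 1)! * (-((j:ℝ) + 2) * polyS (j + 3) x)) x := by
      have := (hasDerivAt_polyS (by omega : 2 ≤ j + 2) hx).const_mul (((-1:ℝ)) ^ j * (j + 1)!)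
      convert this using 2 <;> (try rfl) <;> push_cast <;> ring
    rw [polygamma, iteratedDeriv_succ, ← polygamma, hev.deriv_eq, hD.deriv,
      show j + 2 + 1 = j + 3 from rfl]
    push_cast [factorial_succ]
    ring

lemma key_formula (j : ℕ) {x : ℝ} (hx : 0 < x) :
    x ^ (j + 2) * |polygamma (j + 1) x| = ((j + 1)! : ℝ)
      * ∑' n : ℕ, (x / ((n:ℝ) + x)) ^ (j + 2) := by
  rw [polygamma_eq j hx, abs_mul, abs_mul, abs_pow, abs_neg, abs_one, one_pow, one_mul,
    abs_of_pos (polyS_pos hx (by omega)), Nat.abs_cast]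
  have e : ∑' n : ℕ, (x / ((n:ℝ) + x)) ^ (j + 2) = x ^ (j + 2) * polyS (j + 2) x := by
    rw [polyS, ← tsum_mul_left]
    apply tsum_congr
    intro n
    have h1 : (0:ℝ) < (n:ℝ) + x := by positivity
    rw [div_pow, mul_one_div]
  rw [e]
  ring

theorem stmt0 (i : ℕ) (hi : 0 < i) :
    StrictMonoOn (fun x : ℝ => x ^ (i + 1) * |polygamma i x|) (Set.Ioi 0) := by
  obtain ⟨j, rfl⟩ : ∃ j, i = j + 1 := ⟨i - 1, by omega⟩
  intro a ha b hb hab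
  simp only [mem_Ioi] at ha hb
  simp only [show j + 1 + 1 = j + 2 from rfl]
  rw [key_formula j ha, key_formula j hb]
  have hfac : (0:ℝ) < ((j + 1)! : ℝ) := by positivity
  apply mul_lt_mul_of_pos_left _ hfac
  have hsumb : Summable (fun n : ℕ => (b / ((n:ℝ) + b)) ^ (j + 2)) := by
    apply ((summable_polyS hb (by omega : 2 ≤ j + 2)).mul_left (b ^ (j + 2))).congr
    intro n
    rw [div_pow, mul_one_div]
  have hle : ∀ n : ℕ, (a / ((n:ℝ) + a)) ^ (j + 2) ≤ (b / ((n:ℝ) + b)) ^ (j + 2) := by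
    intro n
    have h1 : (0:ℝ) < (n:ℝ) + a := by positivity
    have h2 : (0:ℝ) < (n:ℝ) + b := by positivity
    apply pow_le_pow_left₀ (by positivity)
    rw [div_le_div_iff₀ h1 h2]
    nlinarith [Nat.cast_nonneg (α := ℝ) n]
  have hlt : (a / (((1:ℕ):ℝ) + a)) ^ (j + 2) < (b / (((1:ℕ):ℝ) + b)) ^ (j + 2) := by
    have h1 : (0:ℝ) < 1 + a := by linarith
    have h2 : (0:ℝ) < 1 + b := by linarith
    push_cast
    apply pow_lt_pow_left₀ _ (by positivity) (by omega)
    rw [div_lt_div_iff₀ h1 h2]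
    nlinarith
  exact Summable.tsum_lt_tsum_of_nonneg (fun n => by positivity) hle hlt hsumb
end

section
/- For every positive integer i, the function x ↦ x^i · |ψ^(i)(x)| is strictly decreasing on (0, ∞), where ψ^(i) denotes the i-th polygamma function. -/
open Real Set Filter Topology MeasureTheory

noncomputable def psum (k : ℕ) (x : ℝ) : ℝ := ∑' n : ℕ, ((x + n) ^ k)⁻¹

lemma base_le {x : ℝ} (hx : 0 < x) (n : ℕ) : min x 1 * ((n : ℝ) + 1) ≤ x + n := by
  rcases le_total x 1 with h | h
  · rw [min_eq_left h]; nlinarith [Nat.cast_nonneg (α := ℝ) n]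
  · rw [min_eq_right h]; nlinarith [Nat.cast_nonneg (α := ℝ) n]

lemma summable_shift {k : ℕ} (hk : 2 ≤ k) :
    Summable (fun n : ℕ => (((n : ℝ) + 1) ^ k)⁻¹) := by
  have h := (summable_nat_add_iff (f := fun n : ℕ => 1 / (n : ℝ) ^ k) 1).mpr
    ((Real.summable_one_div_nat_pow (p := k)).mpr hk)
  refine h.congr fun n => ?_
  push_cast
  rw [one_div]

lemma summable_psum {k : ℕ} (hk : 2 ≤ k) {x : ℝ} (hx : 0 < x) :
    Summable (fun n : ℕ => ((x + n) ^ k)⁻¹) := by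
  have hm : 0 < min x 1 := lt_min hx one_pos
  refine Summable.of_nonneg_of_le (fun n => by positivity)
    (fun n => ?_) (((summable_shift hk).mul_left ((min x 1) ^ k)⁻¹))
  have h1 : (0:ℝ) < ((n:ℝ) + 1) ^ k := by positivity
  have h2 : min x 1 ^ k * ((n:ℝ) + 1) ^ k ≤ (x + n) ^ k := by
    rw [← mul_pow]
    exact pow_le_pow_left₀ (by positivity) (base_le hx n) k
  rw [← mul_inv]
  exact inv_anti₀ (by positivity) h2

lemma psum_pos {k : ℕ} (hk : 2 ≤ k) {x : ℝ} (hx : 0 < x) : 0 < psum k x := by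
  refine Summable.tsum_pos (summable_psum hk hx) (fun n => by positivity) 0 ?_
  have : (0:ℝ) < x + (0:ℕ) := by simpa using hx
  positivity

lemma hasDerivAt_inner {k : ℕ} (n : ℕ) {y : ℝ} (hy : 0 < y) :
    HasDerivAt (fun z : ℝ => ((z + n) ^ k)⁻¹) (-(k:ℝ) * ((y + n) ^ (k+1))⁻¹) y := by
  have hyn : (0:ℝ) < y + n := by positivity
  have h1 : HasDerivAt (fun z : ℝ => z + n) 1 y := (hasDerivAt_id y).add_const _
  have h2 : HasDerivAt (fun z : ℝ => (z + n) ^ k) ((k:ℝ) * (y + n) ^ (k - 1) * 1) y := h1.pow k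
  have h3 : HasDerivAt (fun z : ℝ => ((z + n) ^ k)⁻¹) _ y := h2.inv (by positivity)
  convert h3 using 1
  rcases Nat.eq_zero_or_pos k with rfl | hk
  · simp
  · have hk1 : k - 1 + (k + 1) = 2 * k := by omega
    field_simp
    rw [← pow_mul, ← pow_add, show k * 2 = k + 1 + (k - 1) by omega]

lemma hasDerivAt_psum {k : ℕ} (hk : 2 ≤ k) {x : ℝ} (hx : 0 < x) :
    HasDerivAt (psum k) (-(k : ℝ) * psum (k+1) x) x := by
  have hx2 : 0 < x / 2 := by linarith
  have key : HasDerivAt (fun z : ℝ => ∑' n : ℕ, ((z + n) ^ k)⁻¹)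
      (∑' n : ℕ, -(k:ℝ) * ((x + n) ^ (k+1))⁻¹) x := by
    refine hasDerivAt_tsum_of_isPreconnected
      (u := fun n : ℕ => (k:ℝ) * ((x/2 + n) ^ (k+1))⁻¹)
      (((summable_psum (by omega) hx2).mul_left _))
      isOpen_Ioi (convex_Ioi _).isPreconnected
      (fun n y hy => hasDerivAt_inner n (lt_trans hx2 hy))
      (fun n y hy => ?_) (mem_Ioi.mpr (by linarith : x/2 < x))
      (summable_psum hk hx) (mem_Ioi.mpr (by linarith : x/2 < x))
    rw [mem_Ioi] at hy
    have hy0 : 0 < y := lt_trans hx2 hy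
    rw [norm_mul, norm_neg, Real.norm_natCast, norm_inv, norm_pow, Real.norm_of_nonneg (by positivity)]
    refine mul_le_mul_of_nonneg_left ?_ (Nat.cast_nonneg k)
    refine inv_anti₀ (by positivity) (pow_le_pow_left₀ (by positivity) (by push_cast; linarith) _)
  have : (∑' n : ℕ, -(k:ℝ) * ((x + n) ^ (k+1))⁻¹) = -(k:ℝ) * psum (k+1) x := by
    rw [tsum_mul_left]; rfl
  rw [this] at key
  exact key

local notation "γ" => Real.eulerMascheroniConstant

noncomputable def dser (x : ℝ) : ℝ := -γ + ∑' m : ℕ, (((m:ℝ)+1)⁻¹ - (x+m)⁻¹)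

lemma hser_eq {y : ℝ} (hy : 0 < y) (m : ℕ) :
    ((m:ℝ)+1)⁻¹ - (y+m)⁻¹ = (y - 1) * (((m:ℝ)+1) * (y+m))⁻¹ := by
  have h1 : (0:ℝ) < (m:ℝ)+1 := by positivity
  have h2 : (0:ℝ) < y+m := by positivity
  field_simp
  ring

lemma hbound {a b y : ℝ} (ha : 0 < a) (hay : a ≤ y) (hyb : y ≤ b) (m : ℕ) :
    |((m:ℝ)+1)⁻¹ - (y+m)⁻¹| ≤ (b+1) * ((min a 1 + m)^2)⁻¹ := by
  have hy : 0 < y := lt_of_lt_of_le ha hay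
  have hm : 0 < min a 1 := lt_min ha one_pos
  have h1 : (0:ℝ) < (m:ℝ)+1 := by positivity
  have h2 : (0:ℝ) < y+m := by positivity
  rw [hser_eq hy, abs_mul, abs_inv]
  have e1 : |y - 1| ≤ b + 1 := by
    rw [abs_le]; constructor <;> nlinarith
  have e2 : (min a 1 + m)^2 ≤ |((m:ℝ)+1) * (y+m)| := by
    rw [abs_of_pos (by positivity), sq]
    have l1 : min a 1 + m ≤ (m:ℝ)+1 := by
      have := min_le_right a 1; linarith
    have l2 : min a 1 + m ≤ y+m := by
      have := min_le_left a 1; linarith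
    nlinarith
  calc |y-1| * |((m:ℝ)+1) * (y+m)|⁻¹
      ≤ (b+1) * ((min a 1 + m)^2)⁻¹ := by
        apply mul_le_mul e1 (inv_anti₀ (by positivity) e2) (by positivity) (by linarith)

lemma summable_hser {x : ℝ} (hx : 0 < x) :
    Summable (fun m : ℕ => ((m:ℝ)+1)⁻¹ - (x+m)⁻¹) := by
  have hm : 0 < min x 1 := lt_min hx one_pos
  refine Summable.of_norm (Summable.of_nonneg_of_le (fun n => norm_nonneg _)
    (fun n => hbound hx le_rfl le_rfl n) (((summable_psum le_rfl hm).mul_left (x+1))))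

lemma tendsto_cseq :
    Tendsto (fun n : ℕ => Real.log n - ∑ m ∈ Finset.range (n+1), ((m:ℝ)+1)⁻¹) atTop (𝓝 (-γ)) := by
  have h1 : Tendsto (fun n : ℕ => (harmonic (n+1) : ℝ) - Real.log (n+1)) atTop (𝓝 γ) := by
    have := Real.tendsto_harmonic_sub_log.comp (tendsto_add_atTop_nat 1)
    refine this.congr fun n => ?_
    simp only [Function.comp_apply]
    push_cast
    ring_nf
  have h2 := Real.tendsto_log_nat_add_one_sub_log
  have h3 : Tendsto (fun n : ℕ => ((harmonic (n+1) : ℝ) - Real.log (n+1))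
      + (Real.log ((n:ℝ)+1) - Real.log n)) atTop (𝓝 (γ + 0)) := h1.add h2
  rw [add_zero] at h3
  have h4 := h3.neg
  refine h4.congr fun n => ?_
  have hh : (harmonic (n+1) : ℝ) = ∑ m ∈ Finset.range (n+1), ((m:ℝ)+1)⁻¹ := by
    rw [harmonic]
    push_cast
    simp [one_div]
  rw [hh]
  push_cast
  ring

lemma tuo_shift {F : ℕ → ℝ → ℝ} {f : ℝ → ℝ} {s : Set ℝ}
    (h : TendstoUniformlyOn F f atTop s) :
    TendstoUniformlyOn (fun n => F (n+1)) f atTop s := by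
  intro u hu
  exact (tendsto_add_atTop_nat 1).eventually (h u hu)

lemma tuo_const {c : ℕ → ℝ} {L : ℝ} {s : Set ℝ} (h : Tendsto c atTop (𝓝 L)) :
    TendstoUniformlyOn (fun n (_ : ℝ) => c n) (fun _ => L) atTop s := by
  rw [Metric.tendstoUniformlyOn_iff]
  intro ε hε
  filter_upwards [Metric.tendsto_nhds.mp h ε hε] with n hn y _
  rwa [dist_comm]

lemma tlu_deriv : TendstoLocallyUniformlyOn
    (fun (n : ℕ) (y : ℝ) => Real.log n - ∑ m ∈ Finset.range (n+1), (y + m)⁻¹)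
    dser atTop (Set.Ioi 0) := by
  rw [tendstoLocallyUniformlyOn_iff_forall_isCompact isOpen_Ioi]
  intro K hK hKc
  rcases K.eq_empty_or_nonempty with rfl | hne
  · simp [TendstoUniformlyOn]
  have hbdb := hKc.bddBelow
  have hbda := hKc.bddAbove
  set a := sInf K with ha
  set b := sSup K with hb
  have haK : a ∈ K := hKc.sInf_mem hne
  have ha0 : 0 < a := hK haK
  have hKab : K ⊆ Set.Icc a b := fun y hy => ⟨csInf_le hbdb hy, le_csSup hbda hy⟩
  refine TendstoUniformlyOn.mono ?_ hKab
  have hmin : 0 < min a 1 := lt_min ha0 one_pos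
  -- partial sums part
  have hsum : TendstoUniformlyOn
      (fun (N : ℕ) (y : ℝ) => ∑ m ∈ Finset.range N, (((m:ℝ)+1)⁻¹ - (y+m)⁻¹))
      (fun y => ∑' m : ℕ, (((m:ℝ)+1)⁻¹ - (y+m)⁻¹)) atTop (Set.Icc a b) := by
    refine tendstoUniformlyOn_tsum_nat ((summable_psum le_rfl hmin).mul_left (b+1)) ?_
    intro n y hy
    exact hbound ha0 hy.1 hy.2 n
  have hc := tuo_const (s := Set.Icc a b) tendsto_cseq
  have := hc.add (tuo_shift hsum)
  refine this.congr ?_ |>.congr_right ?_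
  · filter_upwards with n
    intro y hy
    simp only [Pi.add_apply]
    rw [Finset.sum_sub_distrib]
    ring
  · intro y hy
    simp only [Pi.add_apply]
    rfl

lemma hasDerivAt_lgs (n : ℕ) {y : ℝ} (hy : 0 < y) :
    HasDerivAt (fun z : ℝ => Real.BohrMollerup.logGammaSeq z n)
      (Real.log n - ∑ m ∈ Finset.range (n+1), (y + m)⁻¹) y := by
  have h1 : HasDerivAt (fun z : ℝ => z * Real.log n + Real.log (Nat.factorial n)) (Real.log n) y :=
    (hasDerivAt_mul_const _).add_const _
  have h2 : HasDerivAt (fun z : ℝ => ∑ m ∈ Finset.range (n+1), Real.log (z + m))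
      (∑ m ∈ Finset.range (n+1), (y + m)⁻¹) y := by
    refine HasDerivAt.fun_sum fun m _ => ?_
    have hym : (0:ℝ) < y + m := by positivity
    have := ((hasDerivAt_id y).add_const (m:ℝ)).log hym.ne'
    simpa [one_div] using this
  exact h1.sub h2

lemma digamma_eq_s1 {x : ℝ} (hx : 0 < x) : digamma x = dser x := by
  have key : HasDerivAt (fun y : ℝ => Real.log (Real.Gamma y)) (dser x) x := by
    refine hasDerivAt_of_tendstoLocallyUniformlyOn (f := fun (n:ℕ) (y:ℝ) => Real.BohrMollerup.logGammaSeq y n) isOpen_Ioi tlu_deriv ?_ ?_ (Set.mem_Ioi.mpr hx)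
    · filter_upwards with n
      exact fun y hy => hasDerivAt_lgs n (Set.mem_Ioi.mp hy)
    · exact fun y hy => Real.BohrMollerup.tendsto_log_gamma (Set.mem_Ioi.mp hy)
  exact key.deriv

lemma hasDerivAt_dser {x : ℝ} (hx : 0 < x) : HasDerivAt dser (psum 2 x) x := by
  have hx2 : 0 < x / 2 := by linarith
  have hmin : 0 < min (x/2) 1 := lt_min hx2 one_pos
  have key : HasDerivAt (fun y : ℝ => ∑' m : ℕ, (((m:ℝ)+1)⁻¹ - (y+m)⁻¹))
      (∑' m : ℕ, ((x + m)^2)⁻¹) x := by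
    refine hasDerivAt_tsum_of_isPreconnected
      (u := fun m : ℕ => ((x/2 + m) ^ 2)⁻¹)
      (g := fun (m : ℕ) (y : ℝ) => ((m:ℝ)+1)⁻¹ - (y+m)⁻¹)
      (g' := fun (m : ℕ) (y : ℝ) => ((y + m)^2)⁻¹)
      (summable_psum le_rfl hx2)
      isOpen_Ioi (convex_Ioi _).isPreconnected
      (fun m y hy => ?_) (fun m y hy => ?_)
      (Set.mem_Ioi.mpr (by linarith : x/2 < x)) (summable_hser hx)
      (Set.mem_Ioi.mpr (by linarith : x/2 < x))
    · have hy0 : 0 < y := lt_trans hx2 (Set.mem_Ioi.mp hy)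
      have := (hasDerivAt_inner (k := 1) m hy0).const_sub (((m:ℝ)+1)⁻¹)
      simpa using this
    · have hy : x/2 < y := Set.mem_Ioi.mp hy
      have hy0 : 0 < y := lt_trans hx2 hy
      rw [norm_inv, norm_pow, Real.norm_of_nonneg (by positivity)]
      exact inv_anti₀ (by positivity) (pow_le_pow_left₀ (by positivity) (by linarith) _)
  exact key.const_add (-γ)

lemma polygamma_eq_s1 (i : ℕ) (hi : 1 ≤ i) :
    ∀ {x : ℝ}, 0 < x →
      polygamma i x = (-1:ℝ)^(i+1) * (Nat.factorial i : ℝ) * psum (i+1) x := by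
  induction i, hi using Nat.le_induction with
  | base =>
    intro x hx
    have heq : digamma =ᶠ[𝓝 x] dser :=
      Filter.eventuallyEq_of_mem (isOpen_Ioi.mem_nhds (Set.mem_Ioi.mpr hx))
        (fun y hy => digamma_eq_s1 (Set.mem_Ioi.mp hy))
    have : polygamma 1 x = deriv digamma x := by
      rw [polygamma, iteratedDeriv_one]
    rw [this, heq.deriv_eq, (hasDerivAt_dser hx).deriv]
    norm_num
  | succ i hi ih =>
    intro x hx
    have heq : iteratedDeriv i digamma =ᶠ[𝓝 x]
        (fun y => (-1:ℝ)^(i+1) * (Nat.factorial i : ℝ) * psum (i+1) y) :=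
      Filter.eventuallyEq_of_mem (isOpen_Ioi.mem_nhds (Set.mem_Ioi.mpr hx))
        (fun y hy => ih (Set.mem_Ioi.mp hy))
    have hD : HasDerivAt (fun y => (-1:ℝ)^(i+1) * (Nat.factorial i : ℝ) * psum (i+1) y)
        ((-1:ℝ)^(i+1) * (Nat.factorial i : ℝ) * (-((i:ℝ)+1) * psum (i+2) x)) x := by
      have := (hasDerivAt_psum (k := i+1) (by omega) hx).const_mul
        ((-1:ℝ)^(i+1) * (Nat.factorial i : ℝ))
      refine this.congr_deriv ?_
      push_cast
      ring
    have : polygamma (i+1) x = deriv (iteratedDeriv i digamma) x := by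
      rw [polygamma, iteratedDeriv_succ]
    rw [this, heq.deriv_eq, hD.deriv]
    rw [Nat.factorial_succ]
    push_cast
    ring

lemma abs_polygamma {i : ℕ} (hi : 1 ≤ i) {x : ℝ} (hx : 0 < x) :
    |polygamma i x| = (Nat.factorial i : ℝ) * psum (i+1) x := by
  rw [polygamma_eq_s1 i hi hx, abs_mul, abs_mul, abs_pow, abs_neg, abs_one, one_pow, one_mul,
    abs_of_nonneg (by positivity : (0:ℝ) ≤ (Nat.factorial i : ℝ)),
    abs_of_pos (psum_pos (by omega) hx)]

lemma strictAntiOn_aux : StrictAntiOn (fun v : ℝ => (1 - Real.exp (-v)) / v) (Set.Ioi 0) := by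
  have hderiv : ∀ v ∈ Set.Ioi (0:ℝ),
      HasDerivAt (fun v : ℝ => (1 - Real.exp (-v)) / v)
        ((Real.exp (-v) * v - (1 - Real.exp (-v))) / v ^ 2) v := by
    intro v hv
    have hv0 : v ≠ 0 := (Set.mem_Ioi.mp hv).ne'
    have h1 : HasDerivAt (fun v : ℝ => 1 - Real.exp (-v)) (Real.exp (-v)) v := by
      have := (Real.hasDerivAt_exp (-v)).comp v (hasDerivAt_neg v)
      have h2 := this.const_sub (1:ℝ)
      simpa using h2
    have := h1.fun_div (hasDerivAt_id v) hv0
    simpa using this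
  have hneg : ∀ v ∈ interior (Set.Ioi (0:ℝ)),
      deriv (fun v : ℝ => (1 - Real.exp (-v)) / v) v < 0 := by
    rw [interior_Ioi]
    intro v hv
    have hv0 : 0 < v := Set.mem_Ioi.mp hv
    rw [(hderiv v hv).deriv]
    have key : Real.exp (-v) * v - (1 - Real.exp (-v)) < 0 := by
      have h := Real.add_one_lt_exp (x := v) hv0.ne'
      have hev2 : 0 < Real.exp v := Real.exp_pos _
      have e : Real.exp (-v) * v - (1 - Real.exp (-v)) = (v + 1 - Real.exp v)/Real.exp v := by
        rw [Real.exp_neg]; field_simp; ring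
      rw [e]
      exact div_neg_of_neg_of_pos (by linarith) hev2
    exact div_neg_of_neg_of_pos key (by positivity)
  exact strictAntiOn_of_deriv_neg (convex_Ioi 0)
    (fun v hv => ((hderiv v hv).continuousAt.continuousWithinAt)) hneg

lemma denom_mono {x y u : ℝ} (hx : 0 < x) (hxy : x < y) (hu : 0 < u) :
    x * (1 - Real.exp (-(u/x))) < y * (1 - Real.exp (-(u/y))) := by
  have hy : 0 < y := lt_trans hx hxy
  have ha : 0 < u / y := by positivity
  have hb : u / y < u / x := by
    exact div_lt_div_of_pos_left hu hx hxy
  have := strictAntiOn_aux ha (Set.mem_Ioi.mpr (lt_trans ha hb)) hb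
  dsimp only at this
  have e1 : (1 - Real.exp (-(u/x))) / (u/x) = x * (1 - Real.exp (-(u/x))) / u := by
    field_simp
  have e2 : (1 - Real.exp (-(u/y))) / (u/y) = y * (1 - Real.exp (-(u/y))) / u := by
    field_simp
  rw [e1, e2] at this
  exact (div_lt_div_iff_of_pos_right hu).mp this

section integral

open MeasureTheory

variable {i : ℕ}

lemma geom_pointwise {x u : ℝ} (hx : 0 < x) (hu : 0 < u) :
    ENNReal.ofReal (u^i * Real.exp (-u) / (x * (1 - Real.exp (-(u/x)))))
      = ∑' n : ℕ, ENNReal.ofReal (u^i * Real.exp (-u) / x * Real.exp (-(u/x))^n) := by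
  set A := u^i * Real.exp (-u) / x with hA
  set r := Real.exp (-(u/x)) with hr
  have hA0 : 0 ≤ A := by positivity
  have hr0 : 0 ≤ r := Real.exp_nonneg _
  have hr1 : r < 1 := by
    rw [hr, ← Real.exp_zero]
    exact Real.exp_lt_exp.mpr (neg_lt_zero.mpr (by positivity))
  have hsum : Summable (fun n : ℕ => A * r ^ n) :=
    (summable_geometric_of_lt_one hr0 hr1).mul_left A
  rw [← ENNReal.ofReal_tsum_of_nonneg (fun n => by positivity) hsum]
  congr 1
  rw [tsum_mul_left, tsum_geometric_of_lt_one hr0 hr1, hA]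
  have h1 : (0:ℝ) < 1 - r := by linarith
  field_simp

lemma lint_n (hx : (0:ℝ) < x) (n : ℕ) :
    ∫⁻ u in Set.Ioi (0:ℝ), ENNReal.ofReal (u^i * Real.exp (-u) / x * Real.exp (-(u/x))^n)
      = ENNReal.ofReal (((Nat.factorial i : ℝ) * x^i) * (((x + n)^(i+1))⁻¹)) := by
  have hc : (0:ℝ) < (x + n)/x := by positivity
  set c : ℝ := (x + n)/x with hcdef
  have hneg1 : (-1:ℝ) < (i:ℝ) := lt_of_lt_of_le neg_one_lt_zero (Nat.cast_nonneg i)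
  have hint : IntegrableOn (fun u : ℝ => (1/x) * (u ^ (i:ℝ) * Real.exp (-c * u ^ (1:ℝ))))
      (Set.Ioi 0) := by
    exact (integrableOn_rpow_mul_exp_neg_mul_rpow hneg1 one_pos hc).const_mul _
  have heq : ∀ u ∈ Set.Ioi (0:ℝ),
      u^i * Real.exp (-u) / x * Real.exp (-(u/x))^n
        = (1/x) * (u ^ (i:ℝ) * Real.exp (-c * u ^ (1:ℝ))) := by
    intro u hu
    have hu0 : (0:ℝ) < u := hu
    rw [Real.rpow_one, Real.rpow_natCast]
    rw [← Real.exp_nat_mul]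
    have e2 : Real.exp (-u) * Real.exp ((n:ℝ) * -(u/x)) = Real.exp (-c*u) := by
      rw [← Real.exp_add]
      congr 1
      rw [hcdef]
      field_simp
      ring
    calc u^i * Real.exp (-u)/x * Real.exp ((n:ℝ) * -(u/x))
        = (1/x) * (u^i * (Real.exp (-u) * Real.exp ((n:ℝ) * -(u/x)))) := by ring
      _ = (1/x) * (u^i * Real.exp (-c*u)) := by rw [e2]
  have hint2 : IntegrableOn (fun u : ℝ => u^i * Real.exp (-u) / x * Real.exp (-(u/x))^n)
      (Set.Ioi 0) := by
    exact hint.congr_fun (fun u hu => (heq u hu).symm) measurableSet_Ioi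
  have hnn : 0 ≤ᵐ[volume.restrict (Set.Ioi (0:ℝ))]
      (fun u : ℝ => u^i * Real.exp (-u) / x * Real.exp (-(u/x))^n) := by
    filter_upwards [self_mem_ae_restrict measurableSet_Ioi] with u hu
    have : (0:ℝ) < u := hu
    positivity
  rw [← ofReal_integral_eq_lintegral_ofReal hint2 hnn]
  congr 1
  rw [setIntegral_congr_fun measurableSet_Ioi heq, integral_const_mul,
    integral_rpow_mul_exp_neg_mul_rpow one_pos hneg1 hc]
  have hGamma : Real.Gamma ((i:ℝ) + 1) = (Nat.factorial i : ℝ) := Real.Gamma_nat_eq_factorial i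
  rw [show ((i:ℝ)+1)/1 = (i:ℝ)+1 from div_one _, hGamma]
  have hrpow : c ^ (-((i:ℝ) + 1) / 1) = ((c ^ (i+1) : ℝ))⁻¹ := by
    rw [div_one, Real.rpow_neg hc.le]
    congr 1
    rw [show ((i:ℝ) + 1) = ((i+1 : ℕ) : ℝ) by push_cast; ring, Real.rpow_natCast]
  rw [hrpow, hcdef]
  have hxn : (0:ℝ) < x + n := by positivity
  rw [div_pow]
  field_simp
  ring

end integral

lemma lint_eq {i : ℕ} (hi : 1 ≤ i) {x : ℝ} (hx : 0 < x) :
    ∫⁻ u in Set.Ioi (0:ℝ),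
        ENNReal.ofReal (u^i * Real.exp (-u) / (x * (1 - Real.exp (-(u/x)))))
      = ENNReal.ofReal (((Nat.factorial i : ℝ) * x^i) * psum (i+1) x) := by
  rw [setLIntegral_congr_fun measurableSet_Ioi
    (fun u hu => geom_pointwise hx hu)]
  rw [lintegral_tsum (fun n => ((Continuous.measurable (by fun_prop)).ennreal_ofReal).aemeasurable)]
  rw [tsum_congr (fun n => lint_n hx n)]
  rw [← ENNReal.ofReal_tsum_of_nonneg (fun n => by positivity)
    ((summable_psum (by omega) hx).mul_left _)]
  congr 1
  rw [tsum_mul_left]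
  rfl

theorem stmt1 (i : ℕ) (hi : 0 < i) :
    StrictAntiOn (fun x : ℝ => x ^ i * |polygamma i x|) (Set.Ioi 0) := by
  intro x hx y hy hxy
  have hx0 : (0:ℝ) < x := hx
  have hy0 : (0:ℝ) < y := hy
  simp only
  rw [abs_polygamma hi hx0, abs_polygamma hi hy0]
  have Ex := lint_eq hi hx0
  have Ey := lint_eq hi hy0
  have hμ : (volume.restrict (Set.Ioi (0:ℝ))) ≠ 0 := by
    rw [Ne, Measure.restrict_eq_zero, Real.volume_Ioi]
    simp
  have hmeas : AEMeasurable
      (fun u : ℝ => ENNReal.ofReal (u^i * Real.exp (-u) / (x * (1 - Real.exp (-(u/x))))))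
      (volume.restrict (Set.Ioi (0:ℝ))) := by
    refine (Measurable.ennreal_ofReal ?_).aemeasurable
    exact ((by fun_prop : Continuous fun u : ℝ => u^i * Real.exp (-u)).measurable).div
      ((by fun_prop : Continuous fun u : ℝ => x * (1 - Real.exp (-(u/x)))).measurable)
  have hlt : (∫⁻ u in Set.Ioi (0:ℝ),
        ENNReal.ofReal (u^i * Real.exp (-u) / (y * (1 - Real.exp (-(u/y)))))) <
      ∫⁻ u in Set.Ioi (0:ℝ),
        ENNReal.ofReal (u^i * Real.exp (-u) / (x * (1 - Real.exp (-(u/x))))) := by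
    refine lintegral_strict_mono hμ hmeas (by rw [Ey]; exact ENNReal.ofReal_ne_top) ?_
    filter_upwards [self_mem_ae_restrict measurableSet_Ioi] with u hu
    have hu0 : (0:ℝ) < u := hu
    have hd := denom_mono hx0 hxy hu0
    have hdx : 0 < x * (1 - Real.exp (-(u/x))) := by
      have : Real.exp (-(u/x)) < 1 := by
        rw [← Real.exp_zero]
        exact Real.exp_lt_exp.mpr (neg_lt_zero.mpr (by positivity))
      have h1 : 0 < 1 - Real.exp (-(u/x)) := by linarith
      positivity
    have hA : (0:ℝ) < u^i * Real.exp (-u) := by positivity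
    rw [ENNReal.ofReal_lt_ofReal_iff (div_pos hA hdx)]
    exact div_lt_div_of_pos_left hA hdx hd
  rw [Ex, Ey] at hlt
  have := (ENNReal.ofReal_lt_ofReal_iff_of_nonneg
    (mul_nonneg (by positivity) (psum_pos (by omega) hy0).le)).mp hlt
  nlinarith [this]
end

section
/- The function x ↦ ψ(e^x) is strictly concave on ℝ, where ψ is the digamma function. -/
open Filter Topology Finset Real Set

local notation "γ" => Real.eulerMascheroniConstant

namespace DG

lemma hasSum_telescope {g : ℕ → ℝ} (hdec : ∀ n, g (n+1) ≤ g n)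
    (h0 : Tendsto g atTop (𝓝 0)) : HasSum (fun n => g n - g (n+1)) (g 0) := by
  rw [hasSum_iff_tendsto_nat_of_nonneg (fun n => sub_nonneg.mpr (hdec n))]
  have h : (fun n => ∑ i ∈ Finset.range n, (g i - g (i+1))) = fun n => g 0 - g n := by
    funext n; exact Finset.sum_range_sub' g n
  rw [h]
  simpa using tendsto_const_nhds.sub h0

lemma tendsto_shift_pow (c : ℝ) (p : ℕ) (hp : p ≠ 0) :
    Tendsto (fun k : ℕ => 1/(c + k)^p) atTop (𝓝 0) := by
  have h : Tendsto (fun k : ℕ => (c + (k:ℝ))^p) atTop atTop :=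
    (tendsto_pow_atTop hp).comp (tendsto_atTop_add_const_left _ c tendsto_natCast_atTop_atTop)
  simpa [one_div, Pi.inv_def] using h.inv_tendsto_atTop

lemma summable_base : Summable (fun k : ℕ => 1/((k:ℝ)+1)^2) := by
  have h := (summable_nat_add_iff 1).mpr (summable_one_div_nat_pow.mpr one_lt_two)
  simpa using h

lemma summable_sq {x : ℝ} (hx : 0 < x) : Summable (fun k : ℕ => 1/(x + k + 1)^2) := by
  refine Summable.of_nonneg_of_le (fun k => by positivity) (fun k => ?_) summable_base
  exact one_div_le_one_div_of_le (by positivity) (by nlinarith [Nat.cast_nonneg (α := ℝ) k])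

lemma summable_cube {x : ℝ} (hx : 0 < x) : Summable (fun k : ℕ => 2/(x + k + 1)^3) := by
  refine Summable.of_nonneg_of_le (fun k => by positivity) (fun k => ?_)
    (summable_base.mul_left 2)
  rw [mul_one_div, div_le_div_iff₀ (by positivity) (by positivity)]
  have hb : (1:ℝ) ≤ x + k + 1 := by have := Nat.cast_nonneg (α := ℝ) k; linarith
  have h1 : ((k:ℝ)+1)^2 ≤ (x+k+1)^2 := by nlinarith [Nat.cast_nonneg (α := ℝ) k]
  nlinarith [sq_nonneg (x+(k:ℝ)+1), mul_nonneg (sq_nonneg (x+(k:ℝ)+1)) (by linarith : (0:ℝ) ≤ x+k+1-1)]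

lemma summable_u {x : ℝ} (hx : 0 < x) :
    Summable (fun k : ℕ => 1/((k:ℝ)+1) - 1/(x + k + 1)) := by
  have hk : ∀ k : ℕ, (0:ℝ) < (k:ℝ)+1 := fun k => by positivity
  refine Summable.of_nonneg_of_le (fun k => ?_) (fun k => ?_) (summable_base.mul_left x)
  · have : 1/(x + k + 1) ≤ 1/((k:ℝ)+1) := one_div_le_one_div_of_le (hk k) (by linarith)
    linarith
  · have hxk : (0:ℝ) < x + k + 1 := by linarith [hk k]
    rw [mul_one_div, div_sub_div _ _ (hk k).ne' hxk.ne',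
      div_le_div_iff₀ (by positivity) (by positivity)]
    ring_nf
    nlinarith [sq_nonneg ((k:ℝ)+1), hk k, hxk]


noncomputable def cc (n : ℕ) : ℝ := Real.log n - ∑ k ∈ Finset.range n, (1/((k:ℝ)+1))
noncomputable def D1 (n : ℕ) (x : ℝ) : ℝ :=
  cc n - 1/x + ∑ k ∈ Finset.range n, (1/((k:ℝ)+1) - 1/(x+k+1))
noncomputable def D2 (n : ℕ) (x : ℝ) : ℝ := 1/x^2 + ∑ k ∈ Finset.range n, 1/(x+k+1)^2
noncomputable def D3 (n : ℕ) (x : ℝ) : ℝ := -(2/x^3) - ∑ k ∈ Finset.range n, 2/(x+k+1)^3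
noncomputable def psi0 (x : ℝ) : ℝ := -γ - 1/x + ∑' k : ℕ, (1/((k:ℝ)+1) - 1/(x+k+1))
noncomputable def psi1 (x : ℝ) : ℝ := 1/x^2 + ∑' k : ℕ, 1/(x+(k:ℝ)+1)^2
noncomputable def psi2 (x : ℝ) : ℝ := -(2/x^3) - ∑' k : ℕ, 2/(x+(k:ℝ)+1)^3

lemma tendsto_cc : Tendsto cc atTop (𝓝 (-γ)) := by
  have h2 : Tendsto (fun n : ℕ => -((harmonic n : ℝ) - Real.log n)) atTop (𝓝 (-γ)) :=
    Real.tendsto_harmonic_sub_log.neg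
  refine h2.congr fun n => ?_
  have hh : ((harmonic n : ℝ)) = ∑ k ∈ Finset.range n, (1/((k:ℝ)+1)) := by
    rw [harmonic]
    push_cast
    simp [one_div]
  simp [cc, hh]

lemma hasDerivAt_inv_shift {x c : ℝ} (h : x + c ≠ 0) :
    HasDerivAt (fun y : ℝ => 1/(y+c)) (-(1/(x+c)^2)) x := by
  have := ((hasDerivAt_id x).add_const c).fun_inv h
  simpa [one_div, neg_div] using this

lemma hasDerivAt_inv_sq_shift {x c : ℝ} (h : x + c ≠ 0) :
    HasDerivAt (fun y : ℝ => 1/(y+c)^2) (-(2/(x+c)^3)) x := by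
  have hb : HasDerivAt (fun y : ℝ => (y+c)^2) (2*(x+c)) x := by
    simpa [Pi.pow_def] using ((hasDerivAt_id x).add_const c).pow 2
  have h2 := hb.fun_inv (pow_ne_zero 2 h)
  simp only [one_div]
  refine h2.congr_deriv ?_
  rw [neg_div, neg_inj]
  field_simp

lemma hasDerivAt_lgs {x : ℝ} (hx : 0 < x) (n : ℕ) :
    HasDerivAt (fun y => Real.BohrMollerup.logGammaSeq y n) (D1 n x) x := by
  have key : HasDerivAt (fun y => Real.BohrMollerup.logGammaSeq y n)
      (Real.log n - ∑ m ∈ Finset.range (n+1), 1/(x+m)) x := by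
    have h1 : HasDerivAt (fun y : ℝ => y * Real.log n + Real.log (Nat.factorial n))
        (Real.log n) x := by
      simpa using ((hasDerivAt_id x).mul_const (Real.log n)).add_const (Real.log (Nat.factorial n))
    have h2 : HasDerivAt (fun y : ℝ => ∑ m ∈ Finset.range (n+1), Real.log (y+m))
        (∑ m ∈ Finset.range (n+1), 1/(x+m)) x := by
      apply HasDerivAt.fun_sum
      intro m _
      have hpos : (0:ℝ) < x + m := by positivity
      have := (((hasDerivAt_id x).add_const ((m:ℕ):ℝ)).log hpos.ne')
      simpa [one_div] using this
    exact (h1.sub h2)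
  convert key using 1
  rw [D1, cc]
  rw [Finset.sum_range_succ' (fun m => 1/(x+(m:ℝ))) n]
  rw [Finset.sum_sub_distrib]
  push_cast
  simp only [← add_assoc, add_zero]
  ring

lemma hasDerivAt_D1 {x : ℝ} (hx : 0 < x) (n : ℕ) : HasDerivAt (D1 n) (D2 n x) x := by
  have h1 : HasDerivAt (fun y : ℝ => 1/y) (-(1/x^2)) x := by
    simpa [one_div, neg_div] using hasDerivAt_inv hx.ne'
  have h2 : HasDerivAt (fun y : ℝ => ∑ k ∈ Finset.range n, (1/((k:ℝ)+1) - 1/(y+k+1)))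
      (∑ k ∈ Finset.range n, 1/(x+k+1)^2) x := by
    apply HasDerivAt.fun_sum
    intro k _
    have hshift := hasDerivAt_inv_shift (x := x) (c := (k:ℝ)+1) (by positivity)
    simp only [← add_assoc] at hshift
    simpa using hshift.const_sub (1/((k:ℝ)+1))
  have h3 := (h1.const_sub (cc n)).fun_add h2
  refine h3.congr_deriv ?_
  rw [D2]; ring

lemma hasDerivAt_D2 {x : ℝ} (hx : 0 < x) (n : ℕ) : HasDerivAt (D2 n) (D3 n x) x := by
  have h1 : HasDerivAt (fun y : ℝ => 1/y^2) (-(2/x^3)) x := by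
    simpa [zero_add] using hasDerivAt_inv_sq_shift (x := x) (c := 0) (by simpa using hx.ne')
  have h2 : HasDerivAt (fun y : ℝ => ∑ k ∈ Finset.range n, 1/(y+k+1)^2)
      (∑ k ∈ Finset.range n, -(2/(x+k+1)^3)) x := by
    apply HasDerivAt.fun_sum
    intro k _
    have hshift := hasDerivAt_inv_sq_shift (x := x) (c := (k:ℝ)+1) (by positivity)
    simp only [← add_assoc] at hshift
    exact hshift
  have h3 := h1.fun_add h2
  refine h3.congr_deriv ?_
  rw [D3, Finset.sum_neg_distrib]; ring


-- a sequence constant in n converges uniformly to itself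
lemma tuo_frozen {α : Type*} [UniformSpace α] (g : ℝ → α) (s : Set ℝ) :
    TendstoUniformlyOn (fun _ : ℕ => g) g atTop s :=
  fun u hu => Eventually.of_forall (fun _ x _ => refl_mem_uniformity hu)

lemma tuo_D2 : TendstoUniformlyOn D2 psi1 atTop (Ioi 0) := by
  have hsum : TendstoUniformlyOn (fun n x => ∑ k ∈ Finset.range n, 1/(x+(k:ℝ)+1)^2)
      (fun x => ∑' k : ℕ, 1/(x+(k:ℝ)+1)^2) atTop (Ioi 0) := by
    apply tendstoUniformlyOn_tsum_nat (u := fun k => 1/((k:ℝ)+1)^2) summable_base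
    intro k x hx
    rw [Real.norm_eq_abs, abs_of_nonneg (by positivity)]
    apply one_div_le_one_div_of_le (by positivity)
    have : (0:ℝ) < x := hx
    nlinarith [Nat.cast_nonneg (α := ℝ) k]
  have h := (tuo_frozen (fun x : ℝ => 1/x^2) (Ioi 0)).add hsum
  exact h

lemma tuo_D3 : TendstoUniformlyOn D3 psi2 atTop (Ioi 0) := by
  have hsum : TendstoUniformlyOn (fun n x => ∑ k ∈ Finset.range n, 2/(x+(k:ℝ)+1)^3)
      (fun x => ∑' k : ℕ, 2/(x+(k:ℝ)+1)^3) atTop (Ioi 0) := by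
    apply tendstoUniformlyOn_tsum_nat (u := fun k => 2/((k:ℝ)+1)^2) (summable_base.mul_left 2 |>.congr (fun k => by rw [mul_one_div]))
    intro k x hx
    have hx' : (0:ℝ) < x := hx
    rw [Real.norm_eq_abs, abs_of_nonneg (by positivity)]
    apply div_le_div_of_nonneg_left (by norm_num) (by positivity)
    have hb : (1:ℝ) ≤ x + k + 1 := by have := Nat.cast_nonneg (α := ℝ) k; linarith
    have h1 : ((k:ℝ)+1)^2 ≤ (x+k+1)^2 := by nlinarith [Nat.cast_nonneg (α := ℝ) k]
    nlinarith [mul_nonneg (sq_nonneg (x+(k:ℝ)+1)) (by linarith : (0:ℝ) ≤ x+k+1-1)]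
  have h := (tuo_frozen (fun x : ℝ => -(2/x^3)) (Ioi 0)).sub hsum
  exact h

lemma tlu_D1 : TendstoLocallyUniformlyOn D1 psi0 atTop (Ioi 0) := by
  rw [tendstoLocallyUniformlyOn_iff_forall_isCompact isOpen_Ioi]
  intro K hK hKc
  rcases K.eq_empty_or_nonempty with rfl | hne
  · simp [TendstoUniformlyOn]
  obtain ⟨M, hM⟩ := hKc.bddAbove
  have hM0 : 0 < M := lt_of_lt_of_le (hK hne.some_mem) (hM hne.some_mem)
  have hsum : TendstoUniformlyOn (fun n x => ∑ k ∈ Finset.range n, (1/((k:ℝ)+1) - 1/(x+(k:ℝ)+1)))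
      (fun x => ∑' k : ℕ, (1/((k:ℝ)+1) - 1/(x+(k:ℝ)+1))) atTop K := by
    apply tendstoUniformlyOn_tsum_nat (u := fun k => M/((k:ℝ)+1)^2)
      (summable_base.mul_left M |>.congr (fun k => by rw [mul_one_div]))
    intro k x hxK
    have hx : (0:ℝ) < x := hK hxK
    have hk : (0:ℝ) < (k:ℝ)+1 := by positivity
    have hxk : (0:ℝ) < x + k + 1 := by positivity
    have h1 : 1/(x + k + 1) ≤ 1/((k:ℝ)+1) := one_div_le_one_div_of_le hk (by linarith)
    rw [Real.norm_eq_abs, abs_of_nonneg (by linarith)]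
    rw [div_sub_div _ _ hk.ne' hxk.ne', div_le_div_iff₀ (by positivity) (by positivity)]
    have hxM : x ≤ M := hM hxK
    nlinarith [mul_le_mul_of_nonneg_right hxM (sq_nonneg ((k:ℝ)+1)), mul_nonneg (mul_nonneg hM0.le hk.le) hx.le]
  have hc : TendstoUniformlyOn (fun n (_ : ℝ) => cc n) (fun _ => -γ) atTop K :=
    tendsto_cc.tendstoUniformlyOn_const K
  have h := (hc.sub (tuo_frozen (fun x : ℝ => 1/x) K)).add hsum
  exact h


lemma tendsto_D1 {x : ℝ} (hx : 0 < x) : Tendsto (fun n => D1 n x) atTop (𝓝 (psi0 x)) :=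
  (tendsto_cc.sub tendsto_const_nhds).add (summable_u hx).hasSum.tendsto_sum_nat

lemma tendsto_D2 {x : ℝ} (hx : 0 < x) : Tendsto (fun n => D2 n x) atTop (𝓝 (psi1 x)) :=
  tendsto_const_nhds.add (summable_sq hx).hasSum.tendsto_sum_nat

lemma hasDerivAt_logGamma {x : ℝ} (hx : 0 < x) :
    HasDerivAt (fun y => Real.log (Real.Gamma y)) (psi0 x) x :=
  hasDerivAt_of_tendstoLocallyUniformlyOn isOpen_Ioi tlu_D1
    (Eventually.of_forall fun n y hy => hasDerivAt_lgs hy n)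
    (fun y hy => Real.BohrMollerup.tendsto_log_gamma hy) hx

lemma digamma_eq {x : ℝ} (hx : 0 < x) : digamma x = psi0 x :=
  (hasDerivAt_logGamma hx).deriv

lemma hasDerivAt_psi0 {x : ℝ} (hx : 0 < x) : HasDerivAt psi0 (psi1 x) x :=
  hasDerivAt_of_tendstoLocallyUniformlyOn isOpen_Ioi tuo_D2.tendstoLocallyUniformlyOn
    (Eventually.of_forall fun n y hy => hasDerivAt_D1 hy n)
    (fun y hy => tendsto_D1 hy) hx

lemma hasDerivAt_psi1 {x : ℝ} (hx : 0 < x) : HasDerivAt psi1 (psi2 x) x :=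
  hasDerivAt_of_tendstoLocallyUniformlyOn isOpen_Ioi tuo_D3.tendstoLocallyUniformlyOn
    (Eventually.of_forall fun n y hy => hasDerivAt_D2 hy n)
    (fun y hy => tendsto_D2 hy) hx

lemma per_term2 {b : ℝ} (hb : 0 < b) : 1/(b+1)^2 < 1/(b+1/2) - 1/(b+3/2) := by
  rw [div_sub_div _ _ (by positivity) (by positivity), div_lt_div_iff₀ (by positivity) (by positivity)]
  nlinarith

lemma per_term3 {a : ℝ} (ha : 0 < a) :
    (1/a^2 + 1/a^3) - (1/(a+1)^2 + 1/(a+1)^3) ≤ 2/a^3 := by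
  have h1 : 1/a^2 - 1/(a+1)^2 ≤ 1/a^3 + 1/(a+1)^3 := by
    rw [div_sub_div _ _ (by positivity) (by positivity),
      div_add_div _ _ (by positivity) (by positivity),
      div_le_div_iff₀ (by positivity) (by positivity)]
    nlinarith [mul_pos (mul_pos (pow_pos ha 2) (pow_pos (by linarith : (0:ℝ) < a+1) 2))
      (by linarith : (0:ℝ) < 2*a+1), pow_pos ha 2, pow_pos (by linarith : (0:ℝ) < a+1) 2]
  have e : 2/a^3 = 2*(1/a^3) := by ring
  linarith

lemma T2_lt {t : ℝ} (ht : 0 < t) : (∑' k : ℕ, 1/(t+(k:ℝ)+1)^2) < 1/(t+1/2) := by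
  set g : ℕ → ℝ := fun k => 1/(t+(k:ℝ)+1/2) with hgdef
  have hg : HasSum (fun k => g k - g (k+1)) (g 0) := by
    apply hasSum_telescope
    · intro k
      apply one_div_le_one_div_of_le (by positivity)
      push_cast; linarith
    · apply (tendsto_shift_pow (t+1/2) 1 one_ne_zero).congr
      intro k; rw [pow_one, hgdef]; ring_nf
  have hcomp : ∀ k : ℕ, 1/(t+(k:ℝ)+1)^2 ≤ g k - g (k+1) := by
    intro k
    have h := per_term2 (b := t+(k:ℝ)) (by positivity)
    have e : g k - g (k+1) = 1/((t+(k:ℝ))+1/2) - 1/((t+(k:ℝ))+3/2) := by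
      rw [hgdef]; push_cast; ring_nf
    have e2 : 1/(t+(k:ℝ)+1)^2 = 1/((t+(k:ℝ))+1)^2 := by ring_nf
    rw [e, e2]; linarith
  have hlt : (∑' k : ℕ, 1/(t+(k:ℝ)+1)^2) < ∑' k, (g k - g (k+1)) := by
    refine Summable.tsum_lt_tsum_of_nonneg (i := 0) (fun k => by positivity) hcomp ?_ hg.summable
    have h := per_term2 (b := t) ht
    have e : g 0 - g 1 = 1/(t+1/2) - 1/(t+3/2) := by rw [hgdef]; push_cast; ring_nf
    have e2 : 1/(t+((0:ℕ):ℝ)+1)^2 = 1/(t+1)^2 := by norm_num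
    rw [e2, e]; linarith
  refine hlt.trans_eq (hg.tsum_eq.trans ?_)
  rw [hgdef]; norm_num

lemma T3_ge {t : ℝ} (ht : 0 < t) :
    1/(t+1)^2 + 1/(t+1)^3 ≤ ∑' k : ℕ, 2/(t+(k:ℝ)+1)^3 := by
  set Q : ℕ → ℝ := fun k => 1/(t+(k:ℝ)+1)^2 + 1/(t+(k:ℝ)+1)^3 with hQdef
  have hQ : HasSum (fun k => Q k - Q (k+1)) (Q 0) := by
    apply hasSum_telescope
    · intro k
      have h1 : 1/(t+((k:ℝ)+1)+1)^2 ≤ 1/(t+(k:ℝ)+1)^2 := by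
        apply one_div_le_one_div_of_le (by positivity)
        have : (0:ℝ) ≤ t+(k:ℝ)+1 := by positivity
        nlinarith
      have h2 : 1/(t+((k:ℝ)+1)+1)^3 ≤ 1/(t+(k:ℝ)+1)^3 := by
        apply one_div_le_one_div_of_le (by positivity)
        have h0 : (0:ℝ) ≤ t+(k:ℝ)+1 := by positivity
        have h0' : t+(k:ℝ)+1 ≤ t+((k:ℝ)+1)+1 := by linarith
        calc (t+(k:ℝ)+1)^3 ≤ (t+((k:ℝ)+1)+1)^3 := by gcongr
          _ = (t+((k:ℝ)+1)+1)^3 := rfl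
      rw [hQdef]; push_cast; linarith
    · have ha := (tendsto_shift_pow (t+1) 2 two_ne_zero).congr
        (f₂ := fun k : ℕ => 1/(t+(k:ℝ)+1)^2) (fun k => by ring_nf)
      have hb := (tendsto_shift_pow (t+1) 3 three_ne_zero).congr
        (f₂ := fun k : ℕ => 1/(t+(k:ℝ)+1)^3) (fun k => by ring_nf)
      simpa [hQdef] using ha.add hb
  have hcomp : ∀ k : ℕ, Q k - Q (k+1) ≤ 2/(t+(k:ℝ)+1)^3 := by
    intro k
    have h := per_term3 (a := t+(k:ℝ)+1) (by positivity)
    have e : Q k - Q (k+1) = (1/(t+(k:ℝ)+1)^2 + 1/(t+(k:ℝ)+1)^3)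
        - (1/((t+(k:ℝ)+1)+1)^2 + 1/((t+(k:ℝ)+1)+1)^3) := by
      rw [hQdef]; push_cast; ring_nf
    rw [e]; exact h
  have hle : ∑' k, (Q k - Q (k+1)) ≤ ∑' k : ℕ, 2/(t+(k:ℝ)+1)^3 :=
    Summable.tsum_le_tsum hcomp hQ.summable (summable_cube ht)
  refine le_trans (le_of_eq ?_) (hQ.tsum_eq ▸ hle)
  rw [hQdef]; norm_num

lemma key {t : ℝ} (ht : 0 < t) : psi1 t + t * psi2 t < 0 := by
  have h2 : (∑' k : ℕ, 1/(t+(k:ℝ)+1)^2) < 1/t :=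
    (T2_lt ht).trans_le (one_div_le_one_div_of_le ht (by linarith))
  have h3' : 1/t^2 - 1/t^3 ≤ 1/(t+1)^2 + 1/(t+1)^3 := by
    rw [div_sub_div _ _ (by positivity) (by positivity),
      div_add_div _ _ (by positivity) (by positivity),
      div_le_div_iff₀ (by positivity) (by positivity)]
    nlinarith [pow_pos ht 2, pow_pos ht 3, pow_pos (by linarith : (0:ℝ) < t+1) 2,
      pow_pos (by linarith : (0:ℝ) < t+1) 3]
  have h4 : 1/t - 1/t^2 ≤ t * (∑' k : ℕ, 2/(t+(k:ℝ)+1)^3) := by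
    have hmul := mul_le_mul_of_nonneg_left (h3'.trans (T3_ge ht)) ht.le
    have e : t*(1/t^2 - 1/t^3) = 1/t - 1/t^2 := by field_simp
    linarith [hmul, e.ge, e.le]
  have e2 : t * psi2 t = -(2/t^2) - t * (∑' k : ℕ, 2/(t+(k:ℝ)+1)^3) := by
    rw [psi2, mul_sub]
    have e3 : t * (-(2/t^3)) = -(2/t^2) := by field_simp
    rw [← e3]
  have e4 : 2/t^2 = 2*(1/t^2) := by ring
  rw [psi1, e2]
  linarith

end DG

theorem stmt4 : StrictConcaveOn ℝ Set.univ (fun x : ℝ => digamma (Real.exp x)) := by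
  have hfeq : (fun x : ℝ => digamma (Real.exp x)) = fun x => DG.psi0 (Real.exp x) :=
    funext fun x => DG.digamma_eq (Real.exp_pos x)
  rw [hfeq]
  have hd1 : ∀ x : ℝ, HasDerivAt (fun y => DG.psi0 (Real.exp y))
      (DG.psi1 (Real.exp x) * Real.exp x) x :=
    fun x => (DG.hasDerivAt_psi0 (Real.exp_pos x)).comp x (Real.hasDerivAt_exp x)
  apply strictConcaveOn_univ_of_deriv2_neg
  · rw [continuous_iff_continuousAt]
    exact fun x => (hd1 x).differentiableAt.continuousAt
  · intro x
    have hder1 : deriv (fun y => DG.psi0 (Real.exp y))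
        = fun y => DG.psi1 (Real.exp y) * Real.exp y := funext fun y => (hd1 y).deriv
    have hd2 : HasDerivAt (fun y => DG.psi1 (Real.exp y) * Real.exp y)
        ((DG.psi2 (Real.exp x) * Real.exp x) * Real.exp x
          + DG.psi1 (Real.exp x) * Real.exp x) x :=
      ((DG.hasDerivAt_psi1 (Real.exp_pos x)).comp x (Real.hasDerivAt_exp x)).mul
        (Real.hasDerivAt_exp x)
    have hit : deriv^[2] (fun y => DG.psi0 (Real.exp y)) x
        = deriv (deriv (fun y => DG.psi0 (Real.exp y))) x := rfl
    rw [hit, hder1, hd2.deriv]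
    have hk := DG.key (Real.exp_pos x)
    nlinarith [Real.exp_pos x, mul_neg_of_neg_of_pos hk (Real.exp_pos x)]
end

section
/- For every positive integer n, the function x ↦ ψ^(2n-1)(e^x) is convex on ℝ, where ψ^(k) denotes the k-th polygamma function. -/
set_option maxHeartbeats 1000000

open Real Filter Set Topology Finset

namespace PolyAux


lemma summable_T {a : ℕ} (ha : 2 ≤ a) {x : ℝ} (hx : 0 < x) :
    Summable fun k : ℕ => ((x + k) ^ a)⁻¹ := by
  rw [← summable_nat_add_iff 1]
  have hs : Summable fun k : ℕ => (((k : ℝ) + 1) ^ 2)⁻¹ := by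
    have h0 := Real.summable_one_div_nat_pow.mpr (le_refl 2)
    rw [← summable_nat_add_iff 1] at h0
    simpa [one_div] using h0
  refine hs.of_nonneg_of_le (fun k => by positivity) (fun k => ?_)
  have h1 : ((k : ℝ) + 1) ^ 2 ≤ (x + ((k : ℕ) + 1 : ℕ)) ^ a := by
    calc ((k : ℝ) + 1) ^ 2 ≤ ((k : ℝ) + 1) ^ a :=
          pow_le_pow_right₀ (by linarith [k.cast_nonneg (α := ℝ)]) ha
      _ ≤ (x + ((k : ℕ) + 1 : ℕ)) ^ a := by
          apply pow_le_pow_left₀ (by positivity)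
          push_cast; linarith
  exact inv_anti₀ (by positivity) h1

lemma mvt_up {p : ℕ} (hp : 1 ≤ p) {a : ℝ} (ha : 0 < a) :
    (p : ℝ) * (((a + 1) ^ (p + 1))⁻¹) ≤ (a ^ p)⁻¹ - ((a + 1) ^ p)⁻¹ := by
  have hA : (0:ℝ) < a ^ p := by positivity
  have hB : (0:ℝ) < (a + 1) ^ p := by positivity
  have h := one_add_mul_le_pow (a := a⁻¹) (by nlinarith [inv_nonneg.mpr ha.le]) p
  have h3 : (1 + a⁻¹) ^ p * a ^ p = (a + 1) ^ p := by
    rw [← mul_pow]; congr 1; field_simp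
  have hkey2 : a * a ^ p + p * a ^ p ≤ a * (a + 1) ^ p := by
    have h4 := mul_le_mul_of_nonneg_right h hA.le
    rw [h3] at h4
    have h5 : (1 + (p : ℝ) * a⁻¹) * a ^ p * a = a * a ^ p + p * a ^ p := by
      field_simp
    calc a * a ^ p + p * a ^ p = (1 + (p : ℝ) * a⁻¹) * a ^ p * a := h5.symm
      _ ≤ (a + 1) ^ p * a := by
          apply mul_le_mul_of_nonneg_right h4 ha.le
      _ = a * (a + 1) ^ p := by ring
  have e1 : (a ^ p)⁻¹ - ((a + 1) ^ p)⁻¹ = ((a + 1) ^ p - a ^ p) / (a ^ p * (a + 1) ^ p) := by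
    field_simp
  rw [e1, pow_succ, show (p : ℝ) * ((a + 1) ^ p * (a + 1))⁻¹ = (p : ℝ) / ((a + 1) ^ p * (a + 1)) by ring,
    div_le_div_iff₀ (by positivity) (by positivity)]
  nlinarith [mul_le_mul_of_nonneg_right hkey2 hB.le, mul_pos hA hB, mul_pos ha hB,
    mul_nonneg (mul_nonneg ha.le hB.le) (sub_nonneg.mpr (by nlinarith : a ^ p ≤ (a+1)^p))]

lemma mvt_down {p : ℕ} {b : ℝ} (hb : 0 < b) :
    (b ^ p)⁻¹ - ((b + 1) ^ p)⁻¹ ≤ (p : ℝ) * ((b ^ (p + 1))⁻¹) := by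
  have hA : (0:ℝ) < b ^ p := by positivity
  have hB : (0:ℝ) < (b + 1) ^ p := by positivity
  have h := one_add_mul_le_pow (a := -(b + 1)⁻¹) (by
    have : (b + 1)⁻¹ ≤ 1 := by
      rw [inv_le_one_iff₀]; right; linarith
    linarith) p
  have h3 : (1 + -(b + 1)⁻¹) ^ p * (b + 1) ^ p = b ^ p := by
    rw [← mul_pow]; congr 1; field_simp; ring
  have hkey2 : (b + 1) ^ p * (b + 1) ≤ b ^ p * (b + 1) + p * (b + 1) ^ p := by
    have h4 := mul_le_mul_of_nonneg_right h hB.le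
    rw [h3] at h4
    have h5 : (1 + (p:ℝ) * -(b + 1)⁻¹) * (b + 1) ^ p * (b + 1)
        = (b + 1) ^ p * (b + 1) - p * (b + 1) ^ p := by
      field_simp; ring
    nlinarith [mul_le_mul_of_nonneg_right h4 (by linarith : (0:ℝ) ≤ b + 1)]
  have hBA : b ^ p ≤ (b + 1) ^ p := pow_le_pow_left₀ hb.le (by linarith) p
  have e1 : (b ^ p)⁻¹ - ((b + 1) ^ p)⁻¹ = ((b + 1) ^ p - b ^ p) / (b ^ p * (b + 1) ^ p) := by
    field_simp
  rw [e1, pow_succ, show (p : ℝ) * (b ^ p * b)⁻¹ = (p : ℝ) / (b ^ p * b) by ring,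
    div_le_div_iff₀ (by positivity) (by positivity)]
  nlinarith [mul_le_mul_of_nonneg_right hkey2 hA.le, mul_pos hA hB,
    mul_nonneg (mul_nonneg hA.le hA.le) (sub_nonneg.mpr hBA)]

lemma tsum_telescope {f : ℕ → ℝ} (hf : Summable f) :
    ∑' k : ℕ, (f k - f (k + 1)) = f 0 := by
  have h1 : Summable fun k => f (k + 1) := (summable_nat_add_iff 1).mpr hf
  rw [Summable.tsum_sub hf h1]
  have h2 := Summable.tsum_eq_zero_add hf
  linarith

noncomputable def T (a : ℕ) (x : ℝ) : ℝ := ∑' k : ℕ, ((x + k) ^ a)⁻¹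

lemma T_upper {p : ℕ} (hp : 2 ≤ p) {t : ℝ} (ht : 0 < t) :
    T (p + 1) t ≤ (t ^ (p + 1))⁻¹ + (t ^ p)⁻¹ / p := by
  have hp1 : 1 ≤ p := by omega
  have hp0 : (0:ℝ) < p := by exact_mod_cast (show 0 < p by omega)
  set f : ℕ → ℝ := fun k => ((t + k) ^ p)⁻¹ with hfdef
  have hsum : Summable fun k : ℕ => ((t + k) ^ (p + 1))⁻¹ := summable_T (by omega) ht
  have hf : Summable f := summable_T hp ht
  have hf1 : Summable fun k => f (k + 1) := (summable_nat_add_iff 1).mpr hf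
  have hshift : Summable fun k : ℕ => ((t + ((k : ℕ) + 1 : ℕ)) ^ (p + 1))⁻¹ :=
    (summable_nat_add_iff 1).mpr hsum
  have hterm : ∀ k : ℕ, ((t + ((k : ℕ) + 1 : ℕ)) ^ (p + 1))⁻¹ ≤ (f k - f (k + 1)) / p := by
    intro k
    have h0 : (0:ℝ) < t + k := by positivity
    have hm := mvt_up hp1 h0
    rw [le_div_iff₀ hp0]
    have e1 : ((t : ℝ) + ((k : ℕ) + 1 : ℕ)) = (t + k) + 1 := by push_cast; ring
    rw [e1]
    simp only [hfdef]
    rw [show ((t : ℝ) + ((k : ℕ) + 1 : ℕ)) = (t + k) + 1 by push_cast; ring]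
    linarith
  have hts : ∑' k : ℕ, ((t + ((k : ℕ) + 1 : ℕ)) ^ (p + 1))⁻¹ ≤ ∑' k : ℕ, (f k - f (k + 1)) / p :=
    Summable.tsum_le_tsum hterm hshift ((hf.sub hf1).div_const _)
  have htel : ∑' k : ℕ, (f k - f (k + 1)) / p = f 0 / p := by
    rw [tsum_div_const, tsum_telescope hf]
  rw [T, Summable.tsum_eq_zero_add hsum]
  have e0 : ((t : ℝ) + (0 : ℕ)) = t := by push_cast; ring
  rw [e0]
  have ef0 : f 0 = (t ^ p)⁻¹ := by simp [hfdef]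
  rw [htel, ef0] at hts
  linarith

lemma T_lower {p : ℕ} (hp : 2 ≤ p) {t : ℝ} (ht : 0 < t) :
    (t ^ (p + 2))⁻¹ + ((t + 1) ^ (p + 1))⁻¹ / (p + 1) ≤ T (p + 2) t := by
  have hp0 : (0:ℝ) < (p : ℝ) + 1 := by positivity
  set g : ℕ → ℝ := fun k => ((t + k + 1) ^ (p + 1))⁻¹ with hgdef
  have hsum : Summable fun k : ℕ => ((t + k) ^ (p + 2))⁻¹ := summable_T (by omega) ht
  have hshift : Summable fun k : ℕ => ((t + ((k : ℕ) + 1 : ℕ)) ^ (p + 2))⁻¹ :=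
    (summable_nat_add_iff 1).mpr hsum
  have hg : Summable g := by
    have := (summable_nat_add_iff 1).mpr (summable_T (a := p + 1) (by omega) ht)
    apply this.congr
    intro k; simp [hgdef]; norm_num [add_assoc]
  have hg1 : Summable fun k => g (k + 1) := (summable_nat_add_iff 1).mpr hg
  have hterm : ∀ k : ℕ, (g k - g (k + 1)) / ((p : ℝ) + 1)
      ≤ ((t + ((k : ℕ) + 1 : ℕ)) ^ (p + 2))⁻¹ := by
    intro k
    have h0 : (0:ℝ) < t + k + 1 := by positivity
    have hm := mvt_down (p := p + 1) h0
    rw [div_le_iff₀ hp0]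
    have e1 : ((t : ℝ) + ((k : ℕ) + 1 : ℕ)) = t + k + 1 := by push_cast; ring
    simp only [hgdef]
    rw [e1]
    simp only [show p + 1 + 1 = p + 2 from rfl] at hm
    push_cast at hm ⊢
    linarith
  have hts : ∑' k : ℕ, (g k - g (k + 1)) / ((p : ℝ) + 1)
      ≤ ∑' k : ℕ, ((t + ((k : ℕ) + 1 : ℕ)) ^ (p + 2))⁻¹ :=
    Summable.tsum_le_tsum hterm ((hg.sub hg1).div_const _) hshift
  have htel : ∑' k : ℕ, (g k - g (k + 1)) / ((p : ℝ) + 1) = g 0 / ((p : ℝ) + 1) := by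
    rw [tsum_div_const, tsum_telescope hg]
  rw [T, Summable.tsum_eq_zero_add hsum]
  have e0 : ((t : ℝ) + (0 : ℕ)) = t := by push_cast; ring
  rw [e0]
  have eg0 : g 0 = ((t + 1) ^ (p + 1))⁻¹ := by simp [hgdef]
  rw [htel, eg0] at hts
  push_cast at hts ⊢
  linarith

lemma T_nonneg (a : ℕ) {t : ℝ} (ht : 0 < t) : 0 ≤ T a t :=
  tsum_nonneg fun k => by positivity

lemma key {m : ℕ} (hm : 2 ≤ m) {t : ℝ} (ht : 0 < t) :
    T (m + 1) t ≤ ((m : ℝ) + 1) * t * T (m + 2) t := by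
  have hm0 : (0:ℝ) < m := by exact_mod_cast (show 0 < m by omega)
  have hm2 : (2:ℝ) ≤ m := by exact_mod_cast hm
  have hup := T_upper hm ht
  have hlow := T_lower hm ht
  have hYpos : (0:ℝ) < (t ^ (m + 1))⁻¹ := by positivity
  have htinv : t * t⁻¹ = 1 := mul_inv_cancel₀ ht.ne'
  have htm : t ^ (m + 1) * (t ^ (m + 1))⁻¹ = 1 := mul_inv_cancel₀ (by positivity)
  -- the middle inequality
  have hmid : (t ^ (m + 1))⁻¹ + (t ^ m)⁻¹ / m
      ≤ ((m : ℝ) + 1) * t * ((t ^ (m + 2))⁻¹ + ((t + 1) ^ (m + 1))⁻¹ / ((m : ℝ) + 1)) := by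
    have e1 : ((m : ℝ) + 1) * t * ((t ^ (m + 2))⁻¹ + ((t + 1) ^ (m + 1))⁻¹ / ((m : ℝ) + 1))
        = ((m : ℝ) + 1) * (t ^ (m + 1))⁻¹ + t * ((t + 1) ^ (m + 1))⁻¹ := by
      have e2 : t * (t ^ (m + 2))⁻¹ = (t ^ (m + 1))⁻¹ := by
        rw [show m + 2 = (m + 1) + 1 from rfl, pow_succ, mul_inv]
        calc t * ((t ^ (m+1))⁻¹ * t⁻¹) = (t * t⁻¹) * (t ^ (m+1))⁻¹ := by ring
          _ = (t ^ (m+1))⁻¹ := by rw [htinv, one_mul]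
      have e3 : ((m:ℝ) + 1) ≠ 0 := by positivity
      rw [show m + 2 = (m + 1) + 1 from rfl, pow_succ, mul_inv]
      field_simp
      try ring
    rw [e1]
    have etY : (t ^ m)⁻¹ = t * (t ^ (m + 1))⁻¹ := by
      rw [pow_succ, mul_inv]
      calc (t ^ m)⁻¹ = (t * t⁻¹) * (t ^ m)⁻¹ := by rw [htinv, one_mul]
        _ = t * ((t ^ m)⁻¹ * t⁻¹) := by ring
    rcases le_or_gt t ((m : ℝ) ^ 2) with hcase | hcase
    · -- small t : (t^m)⁻¹/m ≤ m * (t^(m+1))⁻¹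
      have h1 : (t ^ m)⁻¹ / m ≤ (m : ℝ) * (t ^ (m + 1))⁻¹ := by
        rw [etY, div_le_iff₀ hm0]
        nlinarith [mul_le_mul_of_nonneg_right hcase hYpos.le]
      have h2 : 0 ≤ t * ((t + 1) ^ (m + 1))⁻¹ := by positivity
      linarith
    · -- large t
      have hX : (0:ℝ) < ((t + 1) ^ (m + 1))⁻¹ := by positivity
      -- S : t * X ≥ (t - (m+1)) * Y
      have hS : (t - ((m:ℝ) + 1)) * (t ^ (m + 1))⁻¹ ≤ t * ((t + 1) ^ (m + 1))⁻¹ := by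
        have hb : (-2:ℝ) ≤ -(t + 1)⁻¹ := by
          have : (t + 1)⁻¹ ≤ 1 := by rw [inv_le_one_iff₀]; right; linarith
          linarith
        have h := one_add_mul_le_pow hb (m + 1)
        have h3 : (1 + -(t + 1)⁻¹) ^ (m + 1) * (t + 1) ^ (m + 1) = t ^ (m + 1) := by
          rw [← mul_pow]; congr 1; field_simp; ring
        -- h : 1 - (m+1)*(t+1)⁻¹ ≤ (1 - (t+1)⁻¹)^(m+1)
        have h4 : (1 - ((m:ℝ) + 1) * (t + 1)⁻¹) * (t + 1) ^ (m + 1) ≤ t ^ (m + 1) := by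
          rw [← h3]
          apply mul_le_mul_of_nonneg_right _ (by positivity)
          push_cast at h ⊢
          linarith
        -- multiply by t * Y * X ≥ 0
        have h5 : (1 - ((m:ℝ) + 1) * (t + 1)⁻¹) ≥ 1 - ((m:ℝ) + 1) * t⁻¹ := by
          have : (t + 1)⁻¹ ≤ t⁻¹ := by
            apply inv_anti₀ ht; linarith
          nlinarith
        have h6 : (1 - ((m:ℝ) + 1) * t⁻¹) * (t + 1) ^ (m + 1) ≤ t ^ (m + 1) := by
          nlinarith [pow_pos (show (0:ℝ) < t + 1 by linarith) (m + 1)]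
        -- now multiply h6 by t * X * Y
        have h7 := mul_le_mul_of_nonneg_right h6 (mul_nonneg (mul_nonneg ht.le hX.le) hYpos.le)
        have hXc : (t + 1) ^ (m + 1) * ((t + 1) ^ (m + 1))⁻¹ = 1 := mul_inv_cancel₀ (by positivity)
        have e7 : (1 - ((m:ℝ) + 1) * t⁻¹) * (t + 1) ^ (m + 1) * (t * (((t + 1) ^ (m + 1))⁻¹ * (t ^ (m + 1))⁻¹))
            = (t - ((m:ℝ) + 1) * (t * t⁻¹)) * ((t + 1) ^ (m + 1) * ((t + 1) ^ (m + 1))⁻¹) * (t ^ (m + 1))⁻¹ := by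
          ring
        have e8 : t ^ (m + 1) * (t * (((t + 1) ^ (m + 1))⁻¹ * (t ^ (m + 1))⁻¹))
            = t * ((t + 1) ^ (m + 1))⁻¹ * (t ^ (m + 1) * (t ^ (m + 1))⁻¹) := by ring
        rw [show t * ((t + 1) ^ (m + 1))⁻¹ * (t ^ (m + 1))⁻¹
              = t * (((t + 1) ^ (m + 1))⁻¹ * (t ^ (m + 1))⁻¹) by ring] at h7
        rw [e7, e8, hXc, htm, htinv] at h7
        simpa using h7
      -- conclude : need (t^m)⁻¹/m = t*Y/m ≤ (t-1)*Y ≤ m*Y + (t-(m+1))*Y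
      have h8 : (t ^ m)⁻¹ / m ≤ (t - 1) * (t ^ (m + 1))⁻¹ := by
        rw [etY, div_le_iff₀ hm0]
        have h9 : t ≤ (t - 1) * m := by nlinarith
        calc t * (t ^ (m+1))⁻¹ ≤ ((t - 1) * m) * (t ^ (m+1))⁻¹ :=
              mul_le_mul_of_nonneg_right h9 hYpos.le
          _ = (t - 1) * (t ^ (m+1))⁻¹ * m := by ring
      linarith
  calc T (m + 1) t ≤ (t ^ (m + 1))⁻¹ + (t ^ m)⁻¹ / m := hup
    _ ≤ ((m : ℝ) + 1) * t * ((t ^ (m + 2))⁻¹ + ((t + 1) ^ (m + 1))⁻¹ / ((m : ℝ) + 1)) := hmid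
    _ ≤ ((m : ℝ) + 1) * t * T (m + 2) t := by
        apply mul_le_mul_of_nonneg_left _ (by positivity)
        push_cast at hlow ⊢
        linarith

lemma hasDerivAt_term {a : ℕ} (ha : 1 ≤ a) (k : ℕ) {y : ℝ} (hy : 0 < y) :
    HasDerivAt (fun z => (((z : ℝ) + k) ^ a)⁻¹) (-(a : ℝ) * ((y + k) ^ (a + 1))⁻¹) y := by
  have hyk : (0:ℝ) < y + k := by positivity
  have h1 : HasDerivAt (fun z : ℝ => z + k) 1 y := (hasDerivAt_id y).add_const _
  have h2 : HasDerivAt (fun z : ℝ => (z + k) ^ a) ((a : ℝ) * (y + k) ^ (a - 1) * 1) y := h1.pow a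
  have h3 := h2.inv (by positivity : (y + k) ^ a ≠ 0)
  refine h3.congr_deriv ?_
  have epow : ((y + k) ^ a) ^ 2 = (y + k) ^ (a - 1) * (y + k) ^ (a + 1) := by
    rw [← pow_mul, ← pow_add]; congr 1; omega
  rw [mul_one, epow]
  have h4 : (y + k) ^ (a - 1) ≠ 0 := by positivity
  have h5 : (y + k) ^ (a + 1) ≠ 0 := by positivity
  field_simp

lemma hasDerivAt_T {a : ℕ} (ha : 2 ≤ a) {x : ℝ} (hx : 0 < x) :
    HasDerivAt (T a) (-(a : ℝ) * T (a + 1) x) x := by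
  have hc : (0:ℝ) < x / 2 := by positivity
  have hu : Summable fun k : ℕ => (a : ℝ) * ((x / 2 + k) ^ (a + 1))⁻¹ :=
    (summable_T (by omega) hc).mul_left _
  have hder := hasDerivAt_tsum_of_isPreconnected hu (isOpen_Ioi (a := x / 2))
      (isPreconnected_Ioi)
      (fun k y (hy : x / 2 < y) => hasDerivAt_term (by omega) k (lt_trans hc hy))
      (fun k y (hy : x / 2 < y) => ?_) (half_lt_self hx) (summable_T ha hx) (half_lt_self hx)
  · have e : ∑' k : ℕ, -(a : ℝ) * ((x + k) ^ (a + 1))⁻¹ = -(a : ℝ) * T (a + 1) x :=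
      tsum_mul_left
    rw [e] at hder
    exact hder
  · have hy0 : (0:ℝ) < y := lt_trans hc hy
    have hyk : (0:ℝ) < y + k := add_pos_of_pos_of_nonneg hy0 (Nat.cast_nonneg k)
    have h1 : (x / 2 + k) ^ (a + 1) ≤ (y + k) ^ (a + 1) :=
      pow_le_pow_left₀ (by positivity) (by linarith) _
    have h2 : ((y + k) ^ (a + 1))⁻¹ ≤ ((x / 2 + k) ^ (a + 1))⁻¹ :=
      inv_anti₀ (by positivity) h1
    have e : ‖-(a : ℝ) * ((y + k) ^ (a + 1))⁻¹‖ = (a : ℝ) * ((y + k) ^ (a + 1))⁻¹ := by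
      rw [norm_mul, norm_neg, Real.norm_natCast, Real.norm_eq_abs,
        abs_of_nonneg (by positivity : (0:ℝ) ≤ ((y + k) ^ (a + 1))⁻¹)]
    rw [e]
    exact mul_le_mul_of_nonneg_left h2 (Nat.cast_nonneg a)

noncomputable def v (m : ℕ) (x : ℝ) : ℝ := (m : ℝ)⁻¹ - (x + m)⁻¹

lemma v_nonneg (m : ℕ) {x : ℝ} (hx : 0 < x) : 0 ≤ v (m + 1) x := by
  have hm : (0:ℝ) < ((m : ℕ) + 1 : ℕ) := by positivity
  have h : (x + ((m : ℕ) + 1 : ℕ))⁻¹ ≤ (((m : ℕ) + 1 : ℕ) : ℝ)⁻¹ :=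
    inv_anti₀ hm (by linarith)
  simp only [v]
  linarith

lemma v_le {m : ℕ} {x : ℝ} (hx : 0 < x) :
    v (m + 1) x ≤ x * (((m : ℝ) + 1) ^ 2)⁻¹ := by
  have hm1 : (0:ℝ) < (m:ℝ) + 1 := by positivity
  have hxm : (0:ℝ) < x + ((m:ℝ) + 1) := by positivity
  have e : v (m + 1) x = x / (((m:ℝ) + 1) * (x + ((m:ℝ) + 1))) := by
    rw [v]; push_cast; field_simp; ring
  rw [e]
  rw [div_le_iff₀ (by positivity)]
  have : (((m:ℝ) + 1) ^ 2)⁻¹ * (((m:ℝ) + 1) * (x + ((m:ℝ) + 1))) = (x + ((m:ℝ)+1)) / ((m:ℝ)+1) := by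
    rw [sq]; field_simp
  rw [mul_assoc, this]
  have h9 : (1:ℝ) ≤ (x + ((m:ℝ) + 1)) / ((m:ℝ) + 1) := by
    rw [le_div_iff₀ hm1]; linarith
  calc x = x * 1 := by ring
    _ ≤ x * ((x + ((m:ℝ) + 1)) / ((m:ℝ) + 1)) := mul_le_mul_of_nonneg_left h9 hx.le

lemma summable_v {x : ℝ} (hx : 0 < x) : Summable fun m : ℕ => v m x := by
  rw [← summable_nat_add_iff 1]
  have hs : Summable fun m : ℕ => x * (((m : ℝ) + 1) ^ 2)⁻¹ := by
    apply Summable.mul_left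
    have h0 := Real.summable_one_div_nat_pow.mpr (le_refl 2)
    rw [← summable_nat_add_iff 1] at h0
    simpa [one_div] using h0
  exact hs.of_nonneg_of_le (fun m => v_nonneg _ hx) (fun m => v_le hx)

lemma hasDerivAt_v (m : ℕ) {y : ℝ} (hy : 0 < y) :
    HasDerivAt (fun z => v m z) (((y + m) ^ 2)⁻¹) y := by
  have h := hasDerivAt_term (a := 1) le_rfl m hy
  simp only [pow_one] at h
  have h2 := h.const_sub ((m : ℝ)⁻¹)
  exact h2.congr_deriv (by norm_num)

noncomputable def psiAux (x : ℝ) : ℝ := -Real.eulerMascheroniConstant + ∑' m : ℕ, v m x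

lemma hasDerivAt_psiAux {x : ℝ} (hx : 0 < x) : HasDerivAt psiAux (T 2 x) x := by
  have hc : (0:ℝ) < x / 2 := by positivity
  have hu : Summable fun k : ℕ => ((x / 2 + k) ^ 2)⁻¹ := summable_T le_rfl hc
  have hder := hasDerivAt_tsum_of_isPreconnected hu (isOpen_Ioi (a := x / 2))
      (isPreconnected_Ioi)
      (fun k y (hy : x / 2 < y) => hasDerivAt_v k (lt_trans hc hy))
      (fun k y (hy : x / 2 < y) => ?_) (half_lt_self hx) (summable_v hx) (half_lt_self hx)
  · have : HasDerivAt (fun z => -Real.eulerMascheroniConstant + ∑' m : ℕ, v m z) (T 2 x) x :=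
      hder.const_add _
    exact this
  · have hy0 : (0:ℝ) < y := lt_trans hc hy
    have hyk : (0:ℝ) < y + k := add_pos_of_pos_of_nonneg hy0 (Nat.cast_nonneg k)
    have h1 : (x / 2 + k) ^ 2 ≤ (y + k) ^ 2 := pow_le_pow_left₀ (by positivity) (by linarith) _
    rw [Real.norm_eq_abs, abs_of_nonneg (by positivity : (0:ℝ) ≤ ((y + k) ^ 2)⁻¹)]
    exact inv_anti₀ (by positivity) h1

lemma harmonic_cast (n : ℕ) :
    (harmonic n : ℝ) = ∑ m ∈ Finset.range (n + 1), ((m : ℝ))⁻¹ := by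
  rw [Finset.sum_range_succ']
  simp only [Nat.cast_zero, inv_zero, add_zero]
  rw [harmonic]
  push_cast
  ring

lemma digamma_eq {x : ℝ} (hx : 0 < x) : digamma x = psiAux x := by
  have hc : (0:ℝ) < x / 2 := by positivity
  set s : Set ℝ := Set.Ioo (x / 2) (x + 1) with hs
  have hxs : x ∈ s := ⟨half_lt_self hx, by linarith⟩
  have hopen : IsOpen s := isOpen_Ioo
  -- convergence of the constant part
  have hA : Tendsto (fun n : ℕ => Real.log n - (harmonic n : ℝ)) atTop
      (𝓝 (-Real.eulerMascheroniConstant)) := by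
    apply Real.tendsto_eulerMascheroniSeq'.neg.congr'
    filter_upwards [eventually_ne_atTop 0] with n hn
    rw [Real.eulerMascheroniSeq', if_neg hn]
    ring
  -- M-test
  have husum : Summable (fun m : ℕ => if m = 0 then (x / 2)⁻¹ else (x + 1) * ((m : ℝ) ^ 2)⁻¹) := by
    rw [← summable_nat_add_iff 1]
    have hs2 : Summable fun m : ℕ => (x + 1) * (((m : ℝ) + 1) ^ 2)⁻¹ := by
      apply Summable.mul_left
      have h0 := Real.summable_one_div_nat_pow.mpr (le_refl 2)
      rw [← summable_nat_add_iff 1] at h0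
      simpa [one_div] using h0
    apply hs2.congr
    intro m
    simp [Nat.succ_ne_zero]
  have hbound : ∀ (m : ℕ) (y : ℝ), y ∈ s →
      ‖v m y‖ ≤ if m = 0 then (x / 2)⁻¹ else (x + 1) * ((m : ℝ) ^ 2)⁻¹ := by
    intro m y hy
    have hy0 : (0:ℝ) < y := lt_trans hc hy.1
    rcases Nat.eq_zero_or_pos m with h0 | h0
    · subst h0
      simp only [v, Nat.cast_zero, inv_zero, zero_sub, norm_neg, if_pos rfl]
      rw [Real.norm_eq_abs, abs_of_nonneg (by positivity : (0:ℝ) ≤ (y + (0:ℝ))⁻¹)]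
      rw [add_zero]
      exact inv_anti₀ hc hy.1.le
    · obtain ⟨m', rfl⟩ : ∃ m', m = m' + 1 := ⟨m - 1, by omega⟩
      rw [if_neg (Nat.succ_ne_zero m')]
      rw [Real.norm_eq_abs, abs_of_nonneg (v_nonneg m' hy0)]
      calc v (m' + 1) y ≤ y * (((m' : ℝ) + 1) ^ 2)⁻¹ := v_le hy0
        _ ≤ (x + 1) * (((m' : ℝ) + 1) ^ 2)⁻¹ := by
            apply mul_le_mul_of_nonneg_right (le_of_lt hy.2) (by positivity)
        _ = (x + 1) * (((m' + 1 : ℕ) : ℝ) ^ 2)⁻¹ := by push_cast; ring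
  have hB : TendstoUniformlyOn (fun n (y : ℝ) => ∑ m ∈ Finset.range n, v m y)
      (fun y => ∑' m : ℕ, v m y) atTop s := tendstoUniformlyOn_tsum_nat husum hbound
  have hB' : TendstoUniformlyOn (fun n (y : ℝ) => ∑ m ∈ Finset.range (n + 1), v m y)
      (fun y => ∑' m : ℕ, v m y) atTop s :=
    fun w hw => (tendsto_add_atTop_nat 1).eventually (hB w hw)
  have hunif : TendstoUniformlyOn
      (fun (n : ℕ) (y : ℝ) => (Real.log n - (harmonic n : ℝ)) + ∑ m ∈ Finset.range (n + 1), v m y)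
      psiAux atTop s := by
    have := (hA.tendstoUniformlyOn_const s).add hB'
    exact this
  -- derivatives of logGammaSeq
  have hderiv : ∀ n : ℕ, ∀ y ∈ s, HasDerivAt (fun z => Real.BohrMollerup.logGammaSeq z n)
      ((Real.log n - (harmonic n : ℝ)) + ∑ m ∈ Finset.range (n + 1), v m y) y := by
    intro n y hy
    have hy0 : (0:ℝ) < y := lt_trans hc hy.1
    have h1 : HasDerivAt (fun z : ℝ => z * Real.log n) (Real.log n) y := by
      simpa using (hasDerivAt_id y).mul_const (Real.log n)
    have h2 : HasDerivAt (fun z : ℝ => ∑ m ∈ Finset.range (n + 1), Real.log (z + m))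
        (∑ m ∈ Finset.range (n + 1), (y + m)⁻¹) y := by
      apply HasDerivAt.fun_sum
      intro m _
      have hym : (0:ℝ) < y + m := add_pos_of_pos_of_nonneg hy0 (Nat.cast_nonneg m)
      exact ((Real.hasDerivAt_log hym.ne').comp y ((hasDerivAt_id y).add_const (m : ℝ))).congr_deriv (mul_one _)
    have h3 := (h1.add_const (Real.log (n.factorial))).fun_sub h2
    have efun : (fun z : ℝ => z * Real.log n + Real.log (n.factorial)
        - ∑ m ∈ Finset.range (n + 1), Real.log (z + m))
        = fun z => Real.BohrMollerup.logGammaSeq z n := by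
      funext z
      rw [Real.BohrMollerup.logGammaSeq]
    rw [efun] at h3
    refine h3.congr_deriv ?_
    -- value identity
    have ev : ∑ m ∈ Finset.range (n + 1), v m y
        = (harmonic n : ℝ) - ∑ m ∈ Finset.range (n + 1), (y + m)⁻¹ := by
      rw [harmonic_cast, ← Finset.sum_sub_distrib]
      rfl
    rw [ev]
    ring
  -- pointwise convergence
  have hpt : ∀ y ∈ s, Tendsto (fun n => Real.BohrMollerup.logGammaSeq y n) atTop
      (𝓝 (Real.log (Real.Gamma y))) := fun y hy => Real.BohrMollerup.tendsto_log_gamma (lt_trans hc hy.1)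
  have hd := hasDerivAt_of_tendstoUniformlyOn hopen hunif
    (Filter.Eventually.of_forall hderiv) hpt hxs
  exact hd.deriv

lemma iteratedDeriv_digamma (j : ℕ) : ∀ {x : ℝ}, 0 < x →
    iteratedDeriv (j + 1) digamma x = (-1 : ℝ) ^ j * (Nat.factorial (j + 1) : ℝ) * T (j + 2) x := by
  induction j with
  | zero =>
    intro x hx
    rw [iteratedDeriv_one]
    have hev : digamma =ᶠ[𝓝 x] psiAux := by
      filter_upwards [isOpen_Ioi.mem_nhds (show x ∈ Set.Ioi 0 from hx)] with y hy
      exact digamma_eq hy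
    rw [hev.deriv_eq, (hasDerivAt_psiAux hx).deriv]
    norm_num
  | succ j ih =>
    intro x hx
    rw [iteratedDeriv_succ]
    have hev : iteratedDeriv (j + 1) digamma
        =ᶠ[𝓝 x] fun y => (-1 : ℝ) ^ j * (Nat.factorial (j + 1) : ℝ) * T (j + 2) y := by
      filter_upwards [isOpen_Ioi.mem_nhds (show x ∈ Set.Ioi 0 from hx)] with y hy
      exact ih hy
    rw [hev.deriv_eq]
    have hT := (hasDerivAt_T (a := j + 2) (by omega) hx).const_mul
      ((-1 : ℝ) ^ j * (Nat.factorial (j + 1) : ℝ))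
    rw [hT.deriv]
    rw [show j + 2 + 1 = j + 1 + 2 from rfl]
    rw [show (j + 1 + 1 : ℕ).factorial = (j + 2) * (j + 1).factorial from rfl]
    push_cast
    ring

lemma convexOn_T_exp {m : ℕ} (hm : 2 ≤ m) :
    ConvexOn ℝ Set.univ (fun x : ℝ => T m (Real.exp x)) := by
  have hd1 : ∀ x : ℝ, HasDerivAt (fun x : ℝ => T m (Real.exp x))
      (-(m : ℝ) * T (m + 1) (Real.exp x) * Real.exp x) x := fun x =>
    (hasDerivAt_T hm (Real.exp_pos x)).comp x (Real.hasDerivAt_exp x)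
  have hD1 : deriv (fun x : ℝ => T m (Real.exp x))
      = fun x => -(m : ℝ) * T (m + 1) (Real.exp x) * Real.exp x := funext fun x => (hd1 x).deriv
  have hd2 : ∀ x : ℝ, HasDerivAt (fun x : ℝ => -(m : ℝ) * T (m + 1) (Real.exp x) * Real.exp x)
      ((m : ℝ) * ((m : ℝ) + 1) * T (m + 2) (Real.exp x) * (Real.exp x * Real.exp x)
        - (m : ℝ) * T (m + 1) (Real.exp x) * Real.exp x) x := by
    intro x
    have h1 := (((hasDerivAt_T (a := m + 1) (by omega) (Real.exp_pos x)).comp x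
      (Real.hasDerivAt_exp x)).const_mul (-(m : ℝ)))
    have h2 := h1.mul (Real.hasDerivAt_exp x)
    simp only [Function.comp_apply] at h2
    refine h2.congr_deriv ?_
    push_cast
    ring
  have hdiff : Differentiable ℝ (fun x : ℝ => T m (Real.exp x)) := fun x =>
    (hd1 x).differentiableAt
  apply convexOn_of_deriv2_nonneg convex_univ hdiff.continuous.continuousOn
    (by rw [interior_univ]; exact hdiff.differentiableOn)
  · rw [interior_univ, hD1]
    exact fun x _ => ((hd2 x).differentiableAt).differentiableWithinAt
  · intro x _
    have e2 : deriv^[2] (fun x : ℝ => T m (Real.exp x)) x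
        = deriv (deriv (fun x : ℝ => T m (Real.exp x))) x := rfl
    rw [e2, hD1, (hd2 x).deriv]
    have hkey := key hm (Real.exp_pos x)
    have hme : (0:ℝ) ≤ (m : ℝ) * Real.exp x := by positivity
    nlinarith [mul_le_mul_of_nonneg_left hkey hme]


end PolyAux

theorem stmt6 (n : ℕ) (hn : 0 < n) :
    ConvexOn ℝ Set.univ (fun x : ℝ => polygamma (2 * n - 1) (Real.exp x)) := by
  have h2 : 2 * n - 1 = (2 * (n - 1)) + 1 := by omega
  have h3 : 2 * (n - 1) + 2 = 2 * n - 1 + 1 := by omega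
  have hfun : (fun x : ℝ => polygamma (2 * n - 1) (Real.exp x))
      = fun x : ℝ => ((Nat.factorial (2 * n - 1) : ℝ)) • PolyAux.T (2 * n - 1 + 1) (Real.exp x) := by
    funext x
    rw [polygamma, h2, PolyAux.iteratedDeriv_digamma _ (Real.exp_pos x)]
    rw [Even.neg_one_pow ⟨n - 1, by ring⟩, h3, ← h2]
    simp [smul_eq_mul]
  rw [hfun]
  refine ConvexOn.smul (by positivity) ?_
  exact PolyAux.convexOn_T_exp (by omega)
end
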